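/- arXiv:1311.3521 — 5 statements merged into one kernel-verified Lean document; each statement's English description precedes it below -/
import Mathlib

section
/- Let P : 𝒟 → ℝ be Lipschitz with 0 ≤ ∂P/∂s ≤ R₀ and 0 ≤ ∂P/∂z a.e., and suppose the set 𝒵 = { z ∈ [0,H] : 0 ∈ Argmin Π_P(·, z) } is nonempty. Then 𝒵 is a closed interval of the form [0, z*] where z* = sup 𝒵. -/
open MeasureTheory

/-- `e(s) = r0^4/(1-2 s r0²)²`. -/
noncomputable def eFun (r0 s : ℝ) : ℝ := r0 ^ 4 / (1 - 2 * s * r0 ^ 2) ^ 2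

/-- `Π_P(ρ,z)`. -/
noncomputable def PiFun (r0 Ω : ℝ) (P : ℝ × ℝ → ℝ) (ρ z : ℝ) : ℝ :=
  ∫ s in (0 : ℝ)..ρ, (Ω ^ 2 * r0 ^ 2 / (2 * (1 - 2 * s * r0 ^ 2)) - P (s, z)) * eFun r0 s

/-- `Argmin Π_P(·,z)` over `[0, 1/(2r0²))`. -/
noncomputable def ArgminPi (r0 Ω : ℝ) (P : ℝ × ℝ → ℝ) (z : ℝ) : Set ℝ :=
  {ρ ∈ Set.Ico (0 : ℝ) (1 / (2 * r0 ^ 2)) |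
    ∀ ρ' ∈ Set.Ico (0 : ℝ) (1 / (2 * r0 ^ 2)), PiFun r0 Ω P ρ z ≤ PiFun r0 Ω P ρ' z}

lemma eFun_nonneg (r0 s : ℝ) : 0 ≤ eFun r0 s := by unfold eFun; positivity

lemma denom_pos {r0 s : ℝ} (hr0 : 0 < r0) (hs : s < 1 / (2 * r0 ^ 2)) :
    0 < 1 - 2 * s * r0 ^ 2 := by
  have h2 : 0 < 2 * r0 ^ 2 := by positivity
  have := (lt_div_iff₀ h2).mp hs
  nlinarith

lemma eFun_mono {r0 s ρ : ℝ} (hr0 : 0 < r0) (hρ : ρ < 1 / (2 * r0 ^ 2))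
    (hs : s ∈ Set.Icc 0 ρ) : eFun r0 s ≤ eFun r0 ρ := by
  have hρd : 0 < 1 - 2 * ρ * r0 ^ 2 := denom_pos hr0 hρ
  have hsd : 0 < 1 - 2 * s * r0 ^ 2 := denom_pos hr0 (lt_of_le_of_lt hs.2 hρ)
  have hle : 1 - 2 * ρ * r0 ^ 2 ≤ 1 - 2 * s * r0 ^ 2 := by nlinarith [hs.2]
  unfold eFun
  apply div_le_div_of_nonneg_left (by positivity) (by positivity)
  nlinarith

lemma integrand_contOn (r0 Ω : ℝ) (hr0 : 0 < r0) (P : ℝ × ℝ → ℝ) (z : ℝ)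
    (hc : ContinuousOn (fun s => P (s, z)) (Set.Ico 0 (1 / (2 * r0 ^ 2))))
    {ρ : ℝ} (hρ : ρ ∈ Set.Ico (0 : ℝ) (1 / (2 * r0 ^ 2))) :
    ContinuousOn (fun s => (Ω ^ 2 * r0 ^ 2 / (2 * (1 - 2 * s * r0 ^ 2)) - P (s, z)) * eFun r0 s)
      (Set.Icc 0 ρ) := by
  have hsub : Set.Icc (0:ℝ) ρ ⊆ Set.Ico 0 (1 / (2 * r0 ^ 2)) :=
    fun s hs => ⟨hs.1, lt_of_le_of_lt hs.2 hρ.2⟩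
  have hne : ∀ s ∈ Set.Icc (0:ℝ) ρ, (1 - 2 * s * r0 ^ 2) ≠ 0 :=
    fun s hs => ne_of_gt (denom_pos hr0 (hsub hs).2)
  apply ContinuousOn.mul
  · apply ContinuousOn.sub
    · exact continuousOn_const.div (by fun_prop) (fun s hs => by
        have := hne s hs; positivity)
    · exact hc.mono hsub
  · exact continuousOn_const.div (by fun_prop) (fun s hs => pow_ne_zero _ (hne s hs))

lemma integrand_intInt (r0 Ω : ℝ) (hr0 : 0 < r0) (P : ℝ × ℝ → ℝ) (z : ℝ)
    (hc : ContinuousOn (fun s => P (s, z)) (Set.Ico 0 (1 / (2 * r0 ^ 2))))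
    {ρ : ℝ} (hρ : ρ ∈ Set.Ico (0 : ℝ) (1 / (2 * r0 ^ 2))) :
    IntervalIntegrable
      (fun s => (Ω ^ 2 * r0 ^ 2 / (2 * (1 - 2 * s * r0 ^ 2)) - P (s, z)) * eFun r0 s)
      volume 0 ρ := by
  have h := (integrand_contOn r0 Ω hr0 P z hc hρ)
  rw [← Set.uIcc_of_le hρ.1] at h
  exact h.intervalIntegrable

lemma Pi_anti (r0 Ω H : ℝ) (hr0 : 0 < r0) (P : ℝ × ℝ → ℝ)
    (hc : ∀ z ∈ Set.Icc (0:ℝ) H, ContinuousOn (fun s => P (s, z)) (Set.Ico 0 (1/(2*r0^2))))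
    (hPz : ∀ s ∈ Set.Ico (0:ℝ) (1/(2*r0^2)), MonotoneOn (fun z => P (s,z)) (Set.Icc 0 H))
    {ρ z z' : ℝ} (hρ : ρ ∈ Set.Ico (0:ℝ) (1/(2*r0^2))) (hz : z ∈ Set.Icc (0:ℝ) H)
    (hz' : z' ∈ Set.Icc (0:ℝ) H) (hle : z ≤ z') :
    PiFun r0 Ω P ρ z' ≤ PiFun r0 Ω P ρ z := by
  unfold PiFun
  apply intervalIntegral.integral_mono_on hρ.1
    (integrand_intInt r0 Ω hr0 P z' (hc z' hz') hρ)
    (integrand_intInt r0 Ω hr0 P z (hc z hz) hρ)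
  intro s hs
  have hsIco : s ∈ Set.Ico (0:ℝ) (1/(2*r0^2)) := ⟨hs.1, lt_of_le_of_lt hs.2 hρ.2⟩
  have hP : P (s, z) ≤ P (s, z') := hPz s hsIco hz hz' hle
  exact mul_le_mul_of_nonneg_right (by linarith) (eFun_nonneg r0 s)

lemma Pi_diff_bound (r0 Ω H : ℝ) (hr0 : 0 < r0) (P : ℝ × ℝ → ℝ) (K : NNReal)
    (hK : LipschitzOnWith K P (Set.Ico (0:ℝ) (1/(2*r0^2)) ×ˢ Set.Icc (0:ℝ) H))
    (hc : ∀ z ∈ Set.Icc (0:ℝ) H, ContinuousOn (fun s => P (s,z)) (Set.Ico 0 (1/(2*r0^2))))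
    {ρ z z' : ℝ} (hρ : ρ ∈ Set.Ico (0:ℝ) (1/(2*r0^2))) (hz : z ∈ Set.Icc (0:ℝ) H)
    (hz' : z' ∈ Set.Icc (0:ℝ) H) :
    |PiFun r0 Ω P ρ z - PiFun r0 Ω P ρ z'| ≤ (K * |z - z'| * eFun r0 ρ) * ρ := by
  have h1 := integrand_intInt r0 Ω hr0 P z (hc z hz) hρ
  have h2 := integrand_intInt r0 Ω hr0 P z' (hc z' hz') hρ
  have hdiff : PiFun r0 Ω P ρ z - PiFun r0 Ω P ρ z'
      = ∫ s in (0:ℝ)..ρ, (P (s,z') - P (s,z)) * eFun r0 s := by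
    unfold PiFun
    rw [← intervalIntegral.integral_sub h1 h2]
    congr 1; funext s; ring
  rw [hdiff]
  have hb : ∀ s ∈ Set.uIoc (0:ℝ) ρ,
      ‖(P (s,z') - P (s,z)) * eFun r0 s‖ ≤ K * |z - z'| * eFun r0 ρ := by
    intro s hs
    rw [Set.uIoc_of_le hρ.1] at hs
    have hsIco : s ∈ Set.Ico (0:ℝ) (1/(2*r0^2)) := ⟨le_of_lt hs.1, lt_of_le_of_lt hs.2 hρ.2⟩
    have hdle : dist (P (s,z')) (P (s,z)) ≤ K * dist ((s,z') : ℝ×ℝ) (s,z) :=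
      hK.dist_le_mul _ ⟨hsIco, hz'⟩ _ ⟨hsIco, hz⟩
    have hdist : dist ((s,z') : ℝ×ℝ) (s,z) = |z - z'| := by
      simp [Prod.dist_eq, Real.dist_eq, abs_sub_comm z' z]
    rw [hdist, Real.dist_eq] at hdle
    rw [norm_mul, Real.norm_eq_abs, Real.norm_eq_abs,
      abs_of_nonneg (eFun_nonneg r0 s)]
    have he : eFun r0 s ≤ eFun r0 ρ := eFun_mono hr0 hρ.2 ⟨le_of_lt hs.1, hs.2⟩
    have h0 : (0:ℝ) ≤ |P (s,z') - P (s,z)| := abs_nonneg _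
    calc |P (s,z') - P (s,z)| * eFun r0 s ≤ (K * |z - z'|) * eFun r0 s := by
          exact mul_le_mul_of_nonneg_right hdle (eFun_nonneg r0 s)
      _ ≤ K * |z - z'| * eFun r0 ρ := by
          exact mul_le_mul_of_nonneg_left he (by positivity)
  have := intervalIntegral.norm_integral_le_of_norm_le_const hb
  rw [Real.norm_eq_abs] at this
  calc |∫ s in (0:ℝ)..ρ, (P (s,z') - P (s,z)) * eFun r0 s|
      ≤ K * |z - z'| * eFun r0 ρ * |ρ - 0| := this
    _ = K * |z - z'| * eFun r0 ρ * ρ := by rw [sub_zero, abs_of_nonneg hρ.1]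


lemma mem_ArgminPi {r0 Ω : ℝ} {P : ℝ × ℝ → ℝ} {z ρ : ℝ} :
    ρ ∈ ArgminPi r0 Ω P z ↔ ρ ∈ Set.Ico (0 : ℝ) (1 / (2 * r0 ^ 2)) ∧
      ∀ ρ' ∈ Set.Ico (0 : ℝ) (1 / (2 * r0 ^ 2)), PiFun r0 Ω P ρ z ≤ PiFun r0 Ω P ρ' z :=
  Iff.rfl


/-- for `P` Lipschitz with `0 ≤ ∂P/∂s ≤ R₀` (encoded as: `P(·,z)` nondecreasing and
`R₀`-Lipschitz) and `0 ≤ ∂P/∂z` (encoded as: `P(s,·)` nondecreasing), if the set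
`𝒵 = { z ∈ [0,H] : 0 ∈ Argmin Π_P(·,z) }` is nonempty then it is the closed interval
`[0, z*]` with `z* = sup 𝒵`. -/
theorem stmt9 (r0 Ω H R0 : ℝ) (hr0 : 0 < r0) (hΩ : 0 < Ω) (hH : 0 < H) (hR0 : 0 < R0)
    (P : ℝ × ℝ → ℝ)
    (hPLip : ∃ K : NNReal, LipschitzOnWith K P
      (Set.Ico (0 : ℝ) (1 / (2 * r0 ^ 2)) ×ˢ Set.Icc (0 : ℝ) H))
    (hPs : ∀ z ∈ Set.Icc (0 : ℝ) H,
      MonotoneOn (fun s => P (s, z)) (Set.Ico (0 : ℝ) (1 / (2 * r0 ^ 2))) ∧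
      LipschitzOnWith (Real.toNNReal R0) (fun s => P (s, z))
        (Set.Ico (0 : ℝ) (1 / (2 * r0 ^ 2))))
    (hPz : ∀ s ∈ Set.Ico (0 : ℝ) (1 / (2 * r0 ^ 2)),
      MonotoneOn (fun z => P (s, z)) (Set.Icc (0 : ℝ) H))
    (hne : {z ∈ Set.Icc (0 : ℝ) H | (0 : ℝ) ∈ ArgminPi r0 Ω P z}.Nonempty) :
    {z ∈ Set.Icc (0 : ℝ) H | (0 : ℝ) ∈ ArgminPi r0 Ω P z}
      = Set.Icc 0 (sSup {z ∈ Set.Icc (0 : ℝ) H | (0 : ℝ) ∈ ArgminPi r0 Ω P z}) := by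
  obtain ⟨K, hK⟩ := hPLip
  have hcont : ∀ z ∈ Set.Icc (0:ℝ) H,
      ContinuousOn (fun s => P (s,z)) (Set.Ico 0 (1/(2*r0^2))) :=
    fun z hz => ((hPs z hz).2).continuousOn
  set S := {z ∈ Set.Icc (0:ℝ) H | (0:ℝ) ∈ ArgminPi r0 Ω P z} with hSdef
  have hSsub : S ⊆ Set.Icc 0 H := fun z hz => hz.1
  have hbdd : BddAbove S := BddAbove.mono hSsub bddAbove_Icc
  have hDpos : 0 < 1/(2*r0^2) := by positivity
  obtain ⟨z0, hz0⟩ := hne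
  have hne' : S.Nonempty := ⟨z0, hz0⟩
  have hsupH : sSup S ≤ H := csSup_le hne' (fun z hz => hz.1.2)
  have hsup0 : 0 ≤ sSup S := le_trans hz0.1.1 (le_csSup hbdd hz0)
  have key : ∀ ρ ∈ Set.Ico (0:ℝ) (1/(2*r0^2)), 0 ≤ PiFun r0 Ω P ρ (sSup S) := by
    intro ρ hρ
    refine le_of_forall_pos_le_add ?_
    intro ε hε
    set C : ℝ := (K : ℝ) * eFun r0 ρ * ρ + 1 with hC
    have hKeρ : 0 ≤ (K : ℝ) * eFun r0 ρ * ρ := by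
      have := eFun_nonneg r0 ρ
      have := hρ.1
      positivity
    have hCpos : 0 < C := by linarith
    set δ := ε / C with hδ
    have hδpos : 0 < δ := div_pos hε hCpos
    obtain ⟨w, hwS, hw⟩ := exists_lt_of_lt_csSup hne' (by linarith : sSup S - δ < sSup S)
    have hwle : w ≤ sSup S := le_csSup hbdd hwS
    have hb := Pi_diff_bound r0 Ω H hr0 P K hK hcont hρ
      (z := sSup S) (z' := w) ⟨hsup0, hsupH⟩ hwS.1
    have habs : |sSup S - w| ≤ δ := by
      rw [abs_of_nonneg (by linarith)]; linarith
    have hPiw : 0 ≤ PiFun r0 Ω P ρ w := by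
      have h0 := (mem_ArgminPi.mp hwS.2).2 ρ hρ
      have h00 : PiFun r0 Ω P 0 w = 0 := intervalIntegral.integral_same
      linarith
    have hbound : (K:ℝ) * |sSup S - w| * eFun r0 ρ * ρ ≤ ε := by
      have h1 : (K:ℝ) * |sSup S - w| * eFun r0 ρ * ρ ≤ C * δ := by
        have h2 : (K:ℝ) * |sSup S - w| * eFun r0 ρ * ρ
            = ((K:ℝ) * eFun r0 ρ * ρ) * |sSup S - w| := by ring
        rw [h2]
        calc ((K:ℝ) * eFun r0 ρ * ρ) * |sSup S - w|
            ≤ ((K:ℝ) * eFun r0 ρ * ρ) * δ :=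
              mul_le_mul_of_nonneg_left habs hKeρ
          _ ≤ C * δ := mul_le_mul_of_nonneg_right (by linarith) hδpos.le
      have h3 : C * δ = ε := by
        rw [hδ]; field_simp
      linarith
    have := abs_le.mp hb
    linarith
  apply Set.eq_of_subset_of_subset
  · intro z hz
    exact ⟨hz.1.1, le_csSup hbdd hz⟩
  · intro z hz
    obtain ⟨hz0', hzle⟩ := hz
    have hzH : z ∈ Set.Icc (0:ℝ) H := ⟨hz0', hzle.trans hsupH⟩
    refine ⟨hzH, mem_ArgminPi.mpr ⟨⟨le_refl 0, hDpos⟩, ?_⟩⟩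
    intro ρ hρ
    have h0 : PiFun r0 Ω P 0 z = 0 := intervalIntegral.integral_same
    rw [h0]
    have hanti := Pi_anti r0 Ω H hr0 P hcont hPz hρ hzH ⟨hsup0, hsupH⟩ hzle
    exact le_trans (key ρ hρ) hanti
end

section
/- Let P satisfy the hypotheses of the reverse Lipschitz estimate (Lipschitz, 0 ≤ ∂P/∂s ≤ R₀, 1/R₀ ≤ ∂P/∂z ≤ R₀ a.e.), z* < H, and let ρ⁻, ρ⁺ be the min/max minimizer functions and 𝔞(s) = inf{ z ∈ [z*,H] : ρ⁻(z) ≥ s }. Then for every s ∈ [ρ⁻(z*), ρ⁻(H)), one has s ∈ [ρ⁻(𝔞(s)), ρ⁺(𝔞(s))]; moreover if s ∈ [ρ⁻(z), ρ⁺(z)] for some z ∈ [z*, H), then 𝔞(s) = z. -/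
open MeasureTheory

lemma one_sub_pos' {r0 s c : ℝ} (hr0 : 0 < r0) (hs : s ≤ c) (hc : c < 1 / (2 * r0 ^ 2)) :
    0 < 1 - 2 * s * r0 ^ 2 := by
  have h2 : 0 < 2 * r0 ^ 2 := by positivity
  have := (lt_div_iff₀ h2).mp hc
  nlinarith

lemma eFun_le {r0 s t : ℝ} (hr0 : 0 < r0) (h0 : 0 ≤ s) (hst : s ≤ t)
    (ht : t < 1 / (2 * r0 ^ 2)) : eFun r0 s ≤ eFun r0 t := by
  have hdt : 0 < 1 - 2 * t * r0 ^ 2 := one_sub_pos' hr0 le_rfl ht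
  have hds : 0 < 1 - 2 * s * r0 ^ 2 := one_sub_pos' hr0 hst ht
  unfold eFun
  apply div_le_div_of_nonneg_left (by positivity) (by positivity)
  have h1 : 1 - 2 * t * r0 ^ 2 ≤ 1 - 2 * s * r0 ^ 2 := by nlinarith
  exact pow_le_pow_left₀ hdt.le h1 2

noncomputable def igr (r0 Ω : ℝ) (P : ℝ × ℝ → ℝ) (z s : ℝ) : ℝ :=
  (Ω ^ 2 * r0 ^ 2 / (2 * (1 - 2 * s * r0 ^ 2)) - P (s, z)) * eFun r0 s

lemma PiFun_eq (r0 Ω : ℝ) (P : ℝ × ℝ → ℝ) (ρ z : ℝ) :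
    PiFun r0 Ω P ρ z = ∫ s in (0:ℝ)..ρ, igr r0 Ω P z s := rfl

lemma contOn_igr {r0 Ω c : ℝ} {P : ℝ × ℝ → ℝ} {z : ℝ} (hr0 : 0 < r0)
    (hc : c < 1 / (2 * r0 ^ 2))
    (hPcont : ContinuousOn (fun s => P (s, z)) (Set.Icc 0 c)) :
    ContinuousOn (igr r0 Ω P z) (Set.Icc (0:ℝ) c) := by
  have hden : ∀ s ∈ Set.Icc (0:ℝ) c, 0 < 1 - 2 * s * r0 ^ 2 :=
    fun s hs => one_sub_pos' hr0 hs.2 hc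
  have h1 : ContinuousOn (fun s : ℝ => Ω ^ 2 * r0 ^ 2 / (2 * (1 - 2 * s * r0 ^ 2)))
      (Set.Icc (0:ℝ) c) := by
    apply ContinuousOn.div continuousOn_const (by fun_prop)
    intro s hs
    have := hden s hs
    positivity
  have h2 : ContinuousOn (eFun r0) (Set.Icc (0:ℝ) c) := by
    apply ContinuousOn.div continuousOn_const (by fun_prop)
    intro s hs
    have := hden s hs
    positivity
  exact (h1.sub hPcont).mul h2

lemma intble_igr {r0 Ω c x y : ℝ} {P : ℝ × ℝ → ℝ} {z : ℝ} (hr0 : 0 < r0)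
    (hc : c < 1 / (2 * r0 ^ 2))
    (hPcont : ContinuousOn (fun s => P (s, z)) (Set.Icc 0 c))
    (hx : x ∈ Set.Icc (0:ℝ) c) (hy : y ∈ Set.Icc (0:ℝ) c) :
    IntervalIntegrable (igr r0 Ω P z) volume x y :=
  ((contOn_igr hr0 hc hPcont).mono (Set.uIcc_subset_Icc hx hy)).intervalIntegrable

lemma Pi_diff_rho {r0 Ω c x y : ℝ} {P : ℝ × ℝ → ℝ} {z : ℝ} (hr0 : 0 < r0)
    (hc : c < 1 / (2 * r0 ^ 2))
    (hPcont : ContinuousOn (fun s => P (s, z)) (Set.Icc 0 c))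
    (hx : x ∈ Set.Icc (0:ℝ) c) (hy : y ∈ Set.Icc (0:ℝ) c) :
    PiFun r0 Ω P y z - PiFun r0 Ω P x z = ∫ s in x..y, igr r0 Ω P z s := by
  have h0 : (0:ℝ) ∈ Set.Icc (0:ℝ) c := ⟨le_rfl, hx.1.trans hx.2⟩
  have h1 := intervalIntegral.integral_add_adjacent_intervals
    (intble_igr (Ω := Ω) hr0 hc hPcont h0 hx) (intble_igr (Ω := Ω) hr0 hc hPcont hx hy)
  rw [PiFun_eq, PiFun_eq, ← h1]
  ring

lemma Pi_diff_z {r0 Ω c ρ : ℝ} {P : ℝ × ℝ → ℝ} {z z' : ℝ} (hr0 : 0 < r0)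
    (hc : c < 1 / (2 * r0 ^ 2))
    (hPcont : ContinuousOn (fun s => P (s, z)) (Set.Icc 0 c))
    (hPcont' : ContinuousOn (fun s => P (s, z')) (Set.Icc 0 c))
    (hρ : ρ ∈ Set.Icc (0:ℝ) c) :
    PiFun r0 Ω P ρ z - PiFun r0 Ω P ρ z' =
      ∫ s in (0:ℝ)..ρ, (P (s, z') - P (s, z)) * eFun r0 s := by
  have h0 : (0:ℝ) ∈ Set.Icc (0:ℝ) c := ⟨le_rfl, hρ.1.trans hρ.2⟩
  rw [PiFun_eq, PiFun_eq,
    ← intervalIntegral.integral_sub (intble_igr (Ω := Ω) hr0 hc hPcont h0 hρ)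
      (intble_igr (Ω := Ω) hr0 hc hPcont' h0 hρ)]
  apply intervalIntegral.integral_congr
  intro s _
  simp only [igr]
  ring

lemma argmin_mem {r0 Ω ρ z : ℝ} {P : ℝ × ℝ → ℝ} (h : ρ ∈ ArgminPi r0 Ω P z) :
    ρ ∈ Set.Ico (0:ℝ) (1 / (2 * r0 ^ 2)) := h.1

lemma argmin_min {r0 Ω ρ z : ℝ} {P : ℝ × ℝ → ℝ} (h : ρ ∈ ArgminPi r0 Ω P z) :
    ∀ ρ' ∈ Set.Ico (0:ℝ) (1 / (2 * r0 ^ 2)), PiFun r0 Ω P ρ z ≤ PiFun r0 Ω P ρ' z := h.2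

lemma eFun_lower {r0 s : ℝ} (hr0 : 0 < r0) (h0 : 0 ≤ s) (hs : s < 1 / (2 * r0 ^ 2)) :
    r0 ^ 4 ≤ eFun r0 s := by
  have hd : 0 < 1 - 2 * s * r0 ^ 2 := one_sub_pos' hr0 le_rfl hs
  have h2' : 0 ≤ 2 * s * r0 ^ 2 := by positivity
  have hd1 : (1 - 2 * s * r0 ^ 2) ^ 2 ≤ 1 := by nlinarith [mul_nonneg h2' hd.le]
  have := div_le_div_of_nonneg_left (by positivity : (0:ℝ) ≤ r0^4) (by positivity) hd1
  simpa [eFun] using this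

lemma intble_Q {r0 Ω c x y : ℝ} {P : ℝ × ℝ → ℝ} {z z' : ℝ} (hr0 : 0 < r0)
    (hc : c < 1 / (2 * r0 ^ 2))
    (hPcont : ContinuousOn (fun s => P (s, z)) (Set.Icc 0 c))
    (hPcont' : ContinuousOn (fun s => P (s, z')) (Set.Icc 0 c))
    (hx : x ∈ Set.Icc (0:ℝ) c) (hy : y ∈ Set.Icc (0:ℝ) c) :
    IntervalIntegrable (fun s => (P (s, z') - P (s, z)) * eFun r0 s) volume x y := by
  have heq : (fun s => (P (s, z') - P (s, z)) * eFun r0 s)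
      = fun s => igr r0 Ω P z s - igr r0 Ω P z' s := by
    funext s; simp only [igr]; ring
  rw [heq]
  exact (intble_igr (Ω := Ω) hr0 hc hPcont hx hy).sub
    (intble_igr (Ω := Ω) hr0 hc hPcont' hx hy)

/-- Weak monotonicity: any minimizer at `z₁` is `≤` any minimizer at `z₂` when `z₁ < z₂`. -/
lemma weak_mono {r0 Ω H R0 : ℝ} {P : ℝ × ℝ → ℝ} (hr0 : 0 < r0) (hR0 : 0 < R0)
    (hPz : ∀ s ∈ Set.Ico (0 : ℝ) (1 / (2 * r0 ^ 2)), ∀ z₁ ∈ Set.Icc (0 : ℝ) H,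
      ∀ z₂ ∈ Set.Icc (0 : ℝ) H, z₁ ≤ z₂ →
        (z₂ - z₁) / R0 ≤ P (s, z₂) - P (s, z₁) ∧ P (s, z₂) - P (s, z₁) ≤ R0 * (z₂ - z₁))
    (hPc : ∀ z ∈ Set.Icc (0:ℝ) H, ContinuousOn (fun s => P (s, z))
      (Set.Ico (0:ℝ) (1 / (2 * r0 ^ 2))))
    {z₁ z₂ ρ₁ ρ₂ : ℝ} (hz₁ : z₁ ∈ Set.Icc (0:ℝ) H) (hz₂ : z₂ ∈ Set.Icc (0:ℝ) H)
    (hlt : z₁ < z₂) (h1 : ρ₁ ∈ ArgminPi r0 Ω P z₁) (h2 : ρ₂ ∈ ArgminPi r0 Ω P z₂) :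
    ρ₁ ≤ ρ₂ := by
  by_contra hcon
  push_neg at hcon
  set b := 1 / (2 * r0 ^ 2) with hb
  set c := max ρ₁ ρ₂ with hcdef
  have hc : c < b := max_lt (argmin_mem h1).2 (argmin_mem h2).2
  have hsub : Set.Icc (0:ℝ) c ⊆ Set.Ico (0:ℝ) b :=
    fun x hx => ⟨hx.1, lt_of_le_of_lt hx.2 hc⟩
  have hPc1 := (hPc z₁ hz₁).mono hsub
  have hPc2 := (hPc z₂ hz₂).mono hsub
  have hρ1 : ρ₁ ∈ Set.Icc (0:ℝ) c := ⟨(argmin_mem h1).1, le_max_left _ _⟩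
  have hρ2 : ρ₂ ∈ Set.Icc (0:ℝ) c := ⟨(argmin_mem h2).1, le_max_right _ _⟩
  -- minimality inequalities
  have hm1 : PiFun r0 Ω P ρ₁ z₁ ≤ PiFun r0 Ω P ρ₂ z₁ :=
    argmin_min h1 ρ₂ (argmin_mem h2)
  have hm2 : PiFun r0 Ω P ρ₂ z₂ ≤ PiFun r0 Ω P ρ₁ z₂ :=
    argmin_min h2 ρ₁ (argmin_mem h1)
  have hd1 := Pi_diff_z (Ω := Ω) hr0 hc hPc1 hPc2 hρ1
  have hd2 := Pi_diff_z (Ω := Ω) hr0 hc hPc1 hPc2 hρ2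
  -- ∫₀^{ρ₁} Q ≤ ∫₀^{ρ₂} Q
  have hDle : (∫ s in (0:ℝ)..ρ₁, (P (s, z₂) - P (s, z₁)) * eFun r0 s)
      ≤ ∫ s in (0:ℝ)..ρ₂, (P (s, z₂) - P (s, z₁)) * eFun r0 s := by linarith
  -- but the integral over [ρ₂, ρ₁] is strictly positive
  have h0c : (0:ℝ) ∈ Set.Icc (0:ℝ) c := ⟨le_rfl, hρ1.1.trans hρ1.2⟩
  have hadj := intervalIntegral.integral_add_adjacent_intervals
    (intble_Q (Ω := Ω) hr0 hc hPc1 hPc2 h0c hρ2)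
    (intble_Q (Ω := Ω) hr0 hc hPc1 hPc2 hρ2 hρ1)
  set m := (z₂ - z₁) / R0 * r0 ^ 4 with hm
  have hmpos : 0 < m := by
    apply mul_pos (div_pos (by linarith) hR0) (by positivity)
  have hlow : (ρ₁ - ρ₂) * m ≤ ∫ s in ρ₂..ρ₁, (P (s, z₂) - P (s, z₁)) * eFun r0 s := by
    have hmono := intervalIntegral.integral_mono_on (μ := volume) hcon.le
      (intervalIntegrable_const (c := m))
      (intble_Q (Ω := Ω) hr0 hc hPc1 hPc2 hρ2 hρ1)
      (fun s hs => by
        have hs' : s ∈ Set.Ico (0:ℝ) b := hsub ⟨hρ2.1.trans hs.1, hs.2.trans hρ1.2⟩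
        have hP := (hPz s hs' z₁ hz₁ z₂ hz₂ hlt.le).1
        have he := eFun_lower hr0 hs'.1 hs'.2
        have hPpos : 0 ≤ (z₂ - z₁) / R0 := div_nonneg (by linarith) hR0.le
        calc m = (z₂ - z₁) / R0 * r0 ^ 4 := rfl
          _ ≤ (P (s, z₂) - P (s, z₁)) * eFun r0 s :=
            mul_le_mul hP he (by positivity) (by linarith))
    rwa [intervalIntegral.integral_const, smul_eq_mul] at hmono
  have : 0 < ∫ s in ρ₂..ρ₁, (P (s, z₂) - P (s, z₁)) * eFun r0 s :=
    lt_of_lt_of_le (by nlinarith) hlow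
  linarith

/-- At any minimizer, the (continuous) integrand is `≥ 0` (right first-order condition). -/
lemma sign_right {r0 Ω H : ℝ} {P : ℝ × ℝ → ℝ} (hr0 : 0 < r0)
    (hPc : ∀ z ∈ Set.Icc (0:ℝ) H, ContinuousOn (fun s => P (s, z))
      (Set.Ico (0:ℝ) (1 / (2 * r0 ^ 2))))
    {z ρ : ℝ} (hz : z ∈ Set.Icc (0:ℝ) H) (h : ρ ∈ ArgminPi r0 Ω P z) :
    0 ≤ igr r0 Ω P z ρ := by
  by_contra hcon
  push_neg at hcon
  set b := 1 / (2 * r0 ^ 2) with hbdef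
  have hρb : ρ < b := (argmin_mem h).2
  have hρ0 : 0 ≤ ρ := (argmin_mem h).1
  set c := (ρ + b) / 2 with hcdef
  have hρc : ρ < c := by simp only [hcdef]; linarith
  have hcb : c < b := by simp only [hcdef]; linarith
  have hsub : Set.Icc (0:ℝ) c ⊆ Set.Ico (0:ℝ) b :=
    fun x hx => ⟨hx.1, lt_of_le_of_lt hx.2 hcb⟩
  have hcont : ContinuousOn (igr r0 Ω P z) (Set.Icc 0 c) :=
    contOn_igr hr0 hcb ((hPc z hz).mono hsub)
  have hρmem : ρ ∈ Set.Icc (0:ℝ) c := ⟨hρ0, hρc.le⟩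
  have hcw : ContinuousWithinAt (igr r0 Ω P z) (Set.Icc 0 c) ρ := hcont ρ hρmem
  have hev : ∀ᶠ x in nhdsWithin ρ (Set.Icc 0 c),
      |igr r0 Ω P z x - igr r0 Ω P z ρ| < -igr r0 Ω P z ρ / 2 := by
    have := Metric.tendsto_nhds.mp hcw (-igr r0 Ω P z ρ / 2) (by linarith)
    simpa [Real.dist_eq] using this
  rw [Filter.eventually_iff, Metric.mem_nhdsWithin_iff] at hev
  obtain ⟨δ, hδ, hball⟩ := hev
  set δ' := min (δ / 2) (c - ρ) with hδ'def
  have hδ' : 0 < δ' := lt_min (by linarith) (by linarith)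
  have hmem' : ρ + δ' ∈ Set.Icc (0:ℝ) c :=
    ⟨by linarith, by have := min_le_right (δ/2) (c - ρ); linarith⟩
  have hfneg : ∀ s ∈ Set.Icc ρ (ρ + δ'), igr r0 Ω P z s ≤ igr r0 Ω P z ρ / 2 := by
    intro s hs
    have hsc : s ∈ Set.Icc (0:ℝ) c := ⟨hρ0.trans hs.1, hs.2.trans hmem'.2⟩
    have hdist : dist s ρ < δ := by
      rw [Real.dist_eq, abs_of_nonneg (by linarith [hs.1])]
      have h1 : δ' ≤ δ / 2 := min_le_left _ _
      linarith [hs.2]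
    have := hball ⟨Metric.mem_ball.mpr hdist, hsc⟩
    rw [Set.mem_setOf_eq, abs_lt] at this
    linarith [this.2]
  have hint : PiFun r0 Ω P (ρ + δ') z - PiFun r0 Ω P ρ z ≤ δ' * (igr r0 Ω P z ρ / 2) := by
    rw [Pi_diff_rho (Ω := Ω) hr0 hcb ((hPc z hz).mono hsub) hρmem hmem']
    have hmono := intervalIntegral.integral_mono_on (μ := volume) (by linarith : ρ ≤ ρ + δ')
      (intble_igr (Ω := Ω) hr0 hcb ((hPc z hz).mono hsub) hρmem hmem')
      (intervalIntegrable_const (c := igr r0 Ω P z ρ / 2)) hfneg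
    rwa [intervalIntegral.integral_const, smul_eq_mul, add_sub_cancel_left] at hmono
  have hminle : PiFun r0 Ω P ρ z ≤ PiFun r0 Ω P (ρ + δ') z :=
    argmin_min h _ (hsub hmem')
  nlinarith

/-- At a positive minimizer, the integrand is `≤ 0` (left first-order condition). -/
lemma sign_left {r0 Ω H : ℝ} {P : ℝ × ℝ → ℝ} (hr0 : 0 < r0)
    (hPc : ∀ z ∈ Set.Icc (0:ℝ) H, ContinuousOn (fun s => P (s, z))
      (Set.Ico (0:ℝ) (1 / (2 * r0 ^ 2))))
    {z ρ : ℝ} (hz : z ∈ Set.Icc (0:ℝ) H) (h : ρ ∈ ArgminPi r0 Ω P z) (hρpos : 0 < ρ) :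
    igr r0 Ω P z ρ ≤ 0 := by
  by_contra hcon
  push_neg at hcon
  set b := 1 / (2 * r0 ^ 2) with hbdef
  have hρb : ρ < b := (argmin_mem h).2
  set c := (ρ + b) / 2 with hcdef
  have hρc : ρ < c := by simp only [hcdef]; linarith
  have hcb : c < b := by simp only [hcdef]; linarith
  have hsub : Set.Icc (0:ℝ) c ⊆ Set.Ico (0:ℝ) b :=
    fun x hx => ⟨hx.1, lt_of_le_of_lt hx.2 hcb⟩
  have hcont : ContinuousOn (igr r0 Ω P z) (Set.Icc 0 c) :=
    contOn_igr hr0 hcb ((hPc z hz).mono hsub)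
  have hρmem : ρ ∈ Set.Icc (0:ℝ) c := ⟨hρpos.le, hρc.le⟩
  have hcw : ContinuousWithinAt (igr r0 Ω P z) (Set.Icc 0 c) ρ := hcont ρ hρmem
  have hev : ∀ᶠ x in nhdsWithin ρ (Set.Icc 0 c),
      |igr r0 Ω P z x - igr r0 Ω P z ρ| < igr r0 Ω P z ρ / 2 := by
    have := Metric.tendsto_nhds.mp hcw (igr r0 Ω P z ρ / 2) (by linarith)
    simpa [Real.dist_eq] using this
  rw [Filter.eventually_iff, Metric.mem_nhdsWithin_iff] at hev
  obtain ⟨δ, hδ, hball⟩ := hev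
  set δ' := min (δ / 2) ρ with hδ'def
  have hδ' : 0 < δ' := lt_min (by linarith) hρpos
  have hmem' : ρ - δ' ∈ Set.Icc (0:ℝ) c :=
    ⟨by have := min_le_right (δ/2) ρ; linarith, by linarith⟩
  have hfpos : ∀ s ∈ Set.Icc (ρ - δ') ρ, igr r0 Ω P z ρ / 2 ≤ igr r0 Ω P z s := by
    intro s hs
    have hsc : s ∈ Set.Icc (0:ℝ) c := ⟨hmem'.1.trans hs.1, hs.2.trans hρc.le⟩
    have hdist : dist s ρ < δ := by
      rw [Real.dist_eq, abs_of_nonpos (by linarith [hs.2])]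
      have h1 : δ' ≤ δ / 2 := min_le_left _ _
      linarith [hs.1]
    have := hball ⟨Metric.mem_ball.mpr hdist, hsc⟩
    rw [Set.mem_setOf_eq, abs_lt] at this
    linarith [this.1]
  have hint : δ' * (igr r0 Ω P z ρ / 2) ≤ PiFun r0 Ω P ρ z - PiFun r0 Ω P (ρ - δ') z := by
    rw [Pi_diff_rho (Ω := Ω) hr0 hcb ((hPc z hz).mono hsub) hmem' hρmem]
    have hmono := intervalIntegral.integral_mono_on (μ := volume) (by linarith : ρ - δ' ≤ ρ)
      (intervalIntegrable_const (c := igr r0 Ω P z ρ / 2))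
      (intble_igr (Ω := Ω) hr0 hcb ((hPc z hz).mono hsub) hmem' hρmem) hfpos
    rwa [intervalIntegral.integral_const, smul_eq_mul, sub_sub_cancel] at hmono
  have hminle : PiFun r0 Ω P ρ z ≤ PiFun r0 Ω P (ρ - δ') z :=
    argmin_min h _ (hsub hmem')
  nlinarith

/-- Strict monotonicity: minimizers at `z₁ < z₂` are strictly ordered, provided `0` is not a
minimizer at `z₂`. -/
lemma strict_mono' {r0 Ω H R0 : ℝ} {P : ℝ × ℝ → ℝ} (hr0 : 0 < r0) (hR0 : 0 < R0)
    (hPz : ∀ s ∈ Set.Ico (0 : ℝ) (1 / (2 * r0 ^ 2)), ∀ z₁ ∈ Set.Icc (0 : ℝ) H,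
      ∀ z₂ ∈ Set.Icc (0 : ℝ) H, z₁ ≤ z₂ →
        (z₂ - z₁) / R0 ≤ P (s, z₂) - P (s, z₁) ∧ P (s, z₂) - P (s, z₁) ≤ R0 * (z₂ - z₁))
    (hPc : ∀ z ∈ Set.Icc (0:ℝ) H, ContinuousOn (fun s => P (s, z))
      (Set.Ico (0:ℝ) (1 / (2 * r0 ^ 2))))
    {z₁ z₂ ρ₁ ρ₂ : ℝ} (hz₁ : z₁ ∈ Set.Icc (0:ℝ) H) (hz₂ : z₂ ∈ Set.Icc (0:ℝ) H)
    (hlt : z₁ < z₂) (h1 : ρ₁ ∈ ArgminPi r0 Ω P z₁) (h2 : ρ₂ ∈ ArgminPi r0 Ω P z₂)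
    (hn0 : (0:ℝ) ∉ ArgminPi r0 Ω P z₂) :
    ρ₁ < ρ₂ := by
  rcases lt_or_eq_of_le (weak_mono hr0 hR0 hPz hPc hz₁ hz₂ hlt h1 h2) with h | h
  · exact h
  subst h
  exfalso
  have hρpos : 0 < ρ₁ := by
    rcases lt_or_eq_of_le (argmin_mem h1).1 with h | h
    · exact h
    · exact absurd (h ▸ h2) hn0
  have hsl := sign_left (Ω := Ω) hr0 hPc hz₁ h1 hρpos
  have hsr := sign_right (Ω := Ω) hr0 hPc hz₂ h2
  have hρmem : ρ₁ ∈ Set.Ico (0:ℝ) (1 / (2 * r0 ^ 2)) := argmin_mem h1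
  have hP := (hPz ρ₁ hρmem z₁ hz₁ z₂ hz₂ hlt.le).1
  have he := eFun_lower hr0 hρmem.1 hρmem.2
  have hdiff : igr r0 Ω P z₂ ρ₁ =
      igr r0 Ω P z₁ ρ₁ - (P (ρ₁, z₂) - P (ρ₁, z₁)) * eFun r0 ρ₁ := by
    simp only [igr]; ring
  have hPd : 0 < (z₂ - z₁) / R0 := div_pos (by linarith) hR0
  have hkey : (z₂ - z₁) / R0 * r0 ^ 4 ≤ (P (ρ₁, z₂) - P (ρ₁, z₁)) * eFun r0 ρ₁ :=
    mul_le_mul hP he (by positivity) (by linarith)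
  have hkey2 : 0 < (z₂ - z₁) / R0 * r0 ^ 4 := by positivity
  linarith

lemma abs_P_diff {r0 H R0 : ℝ} {P : ℝ × ℝ → ℝ} (hR0 : 0 < R0)
    (hPz : ∀ s ∈ Set.Ico (0 : ℝ) (1 / (2 * r0 ^ 2)), ∀ z₁ ∈ Set.Icc (0 : ℝ) H,
      ∀ z₂ ∈ Set.Icc (0 : ℝ) H, z₁ ≤ z₂ →
        (z₂ - z₁) / R0 ≤ P (s, z₂) - P (s, z₁) ∧ P (s, z₂) - P (s, z₁) ≤ R0 * (z₂ - z₁))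
    {s z z' : ℝ} (hs : s ∈ Set.Ico (0:ℝ) (1 / (2 * r0 ^ 2)))
    (hz : z ∈ Set.Icc (0:ℝ) H) (hz' : z' ∈ Set.Icc (0:ℝ) H) :
    |P (s, z') - P (s, z)| ≤ R0 * |z' - z| := by
  rcases le_total z z' with h | h
  · obtain ⟨h1, h2⟩ := hPz s hs z hz z' hz' h
    have hd : 0 ≤ P (s, z') - P (s, z) :=
      le_trans (div_nonneg (by linarith) hR0.le) h1
    rw [abs_of_nonneg hd, abs_of_nonneg (by linarith : (0:ℝ) ≤ z' - z)]
    exact h2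
  · obtain ⟨h1, h2⟩ := hPz s hs z' hz' z hz h
    have hd : 0 ≤ P (s, z) - P (s, z') :=
      le_trans (div_nonneg (by linarith) hR0.le) h1
    rw [abs_of_nonpos (by linarith), abs_of_nonpos (by linarith : z' - z ≤ 0)]
    linarith

lemma Pi_lip_rho {r0 Ω H R0 : ℝ} {P : ℝ × ℝ → ℝ} (hr0 : 0 < r0) (hR0 : 0 < R0)
    (hPz : ∀ s ∈ Set.Ico (0 : ℝ) (1 / (2 * r0 ^ 2)), ∀ z₁ ∈ Set.Icc (0 : ℝ) H,
      ∀ z₂ ∈ Set.Icc (0 : ℝ) H, z₁ ≤ z₂ →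
        (z₂ - z₁) / R0 ≤ P (s, z₂) - P (s, z₁) ∧ P (s, z₂) - P (s, z₁) ≤ R0 * (z₂ - z₁))
    (hPc : ∀ z ∈ Set.Icc (0:ℝ) H, ContinuousOn (fun s => P (s, z))
      (Set.Ico (0:ℝ) (1 / (2 * r0 ^ 2))))
    {a z c M₀ x y : ℝ} (ha : a ∈ Set.Icc (0:ℝ) H) (hz : z ∈ Set.Icc (0:ℝ) H)
    (hc : c < 1 / (2 * r0 ^ 2))
    (hM₀ : ∀ s ∈ Set.Icc (0:ℝ) c, |igr r0 Ω P a s| ≤ M₀)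
    (hx : x ∈ Set.Icc (0:ℝ) c) (hy : y ∈ Set.Icc (0:ℝ) c) :
    |PiFun r0 Ω P y z - PiFun r0 Ω P x z| ≤ (M₀ + R0 * H * eFun r0 c) * |y - x| := by
  have hsub : Set.Icc (0:ℝ) c ⊆ Set.Ico (0:ℝ) (1 / (2 * r0 ^ 2)) :=
    fun u hu => ⟨hu.1, lt_of_le_of_lt hu.2 hc⟩
  rw [Pi_diff_rho (Ω := Ω) hr0 hc ((hPc z hz).mono hsub) hx hy]
  have hB : ∀ s ∈ Set.uIoc x y, ‖igr r0 Ω P z s‖ ≤ M₀ + R0 * H * eFun r0 c := by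
    intro s hs
    have hsc : s ∈ Set.Icc (0:ℝ) c :=
      (Set.uIoc_subset_uIcc.trans (Set.uIcc_subset_Icc hx hy)) hs
    have hsb := hsub hsc
    have hdiff : igr r0 Ω P z s = igr r0 Ω P a s + (P (s, a) - P (s, z)) * eFun r0 s := by
      simp only [igr]; ring
    have hP := abs_P_diff hR0 hPz hsb hz ha
    have hzaH : |a - z| ≤ H := by
      rw [abs_le]; constructor <;> [linarith [hz.2, ha.1]; linarith [ha.2, hz.1]]
    have he0 : 0 ≤ eFun r0 s := eFun_nonneg r0 s
    have heE : eFun r0 s ≤ eFun r0 c := eFun_le hr0 hsc.1 hsc.2 hc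
    have h1 : |(P (s, a) - P (s, z)) * eFun r0 s| ≤ R0 * H * eFun r0 c := by
      rw [abs_mul, abs_of_nonneg he0]
      calc |P (s, a) - P (s, z)| * eFun r0 s ≤ (R0 * |a - z|) * eFun r0 c :=
            mul_le_mul hP heE he0 (mul_nonneg hR0.le (abs_nonneg _))
        _ ≤ R0 * H * eFun r0 c := by
            have : R0 * |a - z| ≤ R0 * H := by nlinarith [abs_nonneg (a - z)]
            nlinarith [eFun_nonneg r0 c]
    rw [Real.norm_eq_abs, hdiff]
    calc |igr r0 Ω P a s + (P (s, a) - P (s, z)) * eFun r0 s|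
        ≤ |igr r0 Ω P a s| + |(P (s, a) - P (s, z)) * eFun r0 s| := abs_add_le _ _
      _ ≤ M₀ + R0 * H * eFun r0 c := add_le_add (hM₀ s hsc) h1
  have := intervalIntegral.norm_integral_le_of_norm_le_const hB
  rwa [Real.norm_eq_abs] at this

lemma Pi_lip_z {r0 Ω H R0 : ℝ} {P : ℝ × ℝ → ℝ} (hr0 : 0 < r0) (hR0 : 0 < R0)
    (hPz : ∀ s ∈ Set.Ico (0 : ℝ) (1 / (2 * r0 ^ 2)), ∀ z₁ ∈ Set.Icc (0 : ℝ) H,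
      ∀ z₂ ∈ Set.Icc (0 : ℝ) H, z₁ ≤ z₂ →
        (z₂ - z₁) / R0 ≤ P (s, z₂) - P (s, z₁) ∧ P (s, z₂) - P (s, z₁) ≤ R0 * (z₂ - z₁))
    (hPc : ∀ z ∈ Set.Icc (0:ℝ) H, ContinuousOn (fun s => P (s, z))
      (Set.Ico (0:ℝ) (1 / (2 * r0 ^ 2))))
    {z z' c ρ : ℝ} (hz : z ∈ Set.Icc (0:ℝ) H) (hz' : z' ∈ Set.Icc (0:ℝ) H)
    (hc : c < 1 / (2 * r0 ^ 2)) (hρ : ρ ∈ Set.Icc (0:ℝ) c) :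
    |PiFun r0 Ω P ρ z - PiFun r0 Ω P ρ z'| ≤ R0 * |z' - z| * eFun r0 c * c := by
  have hsub : Set.Icc (0:ℝ) c ⊆ Set.Ico (0:ℝ) (1 / (2 * r0 ^ 2)) :=
    fun u hu => ⟨hu.1, lt_of_le_of_lt hu.2 hc⟩
  rw [Pi_diff_z (Ω := Ω) hr0 hc ((hPc z hz).mono hsub) ((hPc z' hz').mono hsub) hρ]
  have hB : ∀ s ∈ Set.uIoc (0:ℝ) ρ, ‖(P (s, z') - P (s, z)) * eFun r0 s‖
      ≤ R0 * |z' - z| * eFun r0 c := by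
    intro s hs
    have hsc : s ∈ Set.Icc (0:ℝ) c := by
      rcases Set.mem_uIoc.mp hs with h | h
      · exact ⟨h.1.le, h.2.trans hρ.2⟩
      · exact ⟨hρ.1.trans h.1.le, h.2.trans (hρ.1.trans hρ.2)⟩
    have hsb := hsub hsc
    have hP := abs_P_diff hR0 hPz hsb hz hz'
    have he0 : 0 ≤ eFun r0 s := eFun_nonneg r0 s
    have heE : eFun r0 s ≤ eFun r0 c := eFun_le hr0 hsc.1 hsc.2 hc
    rw [Real.norm_eq_abs, abs_mul, abs_of_nonneg he0]
    exact mul_le_mul hP heE he0 (mul_nonneg hR0.le (abs_nonneg _))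
  have := intervalIntegral.norm_integral_le_of_norm_le_const hB
  rw [Real.norm_eq_abs] at this
  calc |∫ s in (0:ℝ)..ρ, (P (s, z') - P (s, z)) * eFun r0 s|
      ≤ R0 * |z' - z| * eFun r0 c * |ρ - 0| := this
    _ ≤ R0 * |z' - z| * eFun r0 c * c := by
        have h1 : |ρ - 0| ≤ c := by rw [sub_zero, abs_of_nonneg hρ.1]; exact hρ.2
        have h2 : 0 ≤ R0 * |z' - z| * eFun r0 c :=
          mul_nonneg (mul_nonneg hR0.le (abs_nonneg _)) (eFun_nonneg _ _)
        nlinarith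

/-- If minimizers at nearby `z` approach `(a, ρst)`, then `ρst` is a minimizer at `a`. -/
lemma limit_argmin {r0 Ω H R0 : ℝ} {P : ℝ × ℝ → ℝ} (hr0 : 0 < r0) (hR0 : 0 < R0)
    (hPz : ∀ s ∈ Set.Ico (0 : ℝ) (1 / (2 * r0 ^ 2)), ∀ z₁ ∈ Set.Icc (0 : ℝ) H,
      ∀ z₂ ∈ Set.Icc (0 : ℝ) H, z₁ ≤ z₂ →
        (z₂ - z₁) / R0 ≤ P (s, z₂) - P (s, z₁) ∧ P (s, z₂) - P (s, z₁) ≤ R0 * (z₂ - z₁))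
    (hPc : ∀ z ∈ Set.Icc (0:ℝ) H, ContinuousOn (fun s => P (s, z))
      (Set.Ico (0:ℝ) (1 / (2 * r0 ^ 2))))
    {a ρst c : ℝ} (ha : a ∈ Set.Icc (0:ℝ) H) (hc : c < 1 / (2 * r0 ^ 2))
    (hρst : ρst ∈ Set.Icc (0:ℝ) c)
    (happ : ∀ δ > 0, ∃ z ρ, z ∈ Set.Icc (0:ℝ) H ∧ ρ ∈ ArgminPi r0 Ω P z ∧
      ρ ∈ Set.Icc (0:ℝ) c ∧ |z - a| ≤ δ ∧ |ρ - ρst| ≤ δ) :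
    ρst ∈ ArgminPi r0 Ω P a := by
  refine ⟨⟨hρst.1, hρst.2.trans_lt hc⟩, ?_⟩
  intro ρ' hρ'
  set c' := max c ρ' with hc'def
  have hc' : c' < 1 / (2 * r0 ^ 2) := max_lt hc hρ'.2
  have hcc' : Set.Icc (0:ℝ) c ⊆ Set.Icc (0:ℝ) c' :=
    Set.Icc_subset_Icc le_rfl (le_max_left _ _)
  have hsub' : Set.Icc (0:ℝ) c' ⊆ Set.Ico (0:ℝ) (1 / (2 * r0 ^ 2)) :=
    fun u hu => ⟨hu.1, lt_of_le_of_lt hu.2 hc'⟩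
  have hcont : ContinuousOn (igr r0 Ω P a) (Set.Icc 0 c') :=
    contOn_igr hr0 hc' ((hPc a ha).mono hsub')
  obtain ⟨M₀, hM₀n⟩ := isCompact_Icc.exists_bound_of_continuousOn hcont
  have hM₀ : ∀ s ∈ Set.Icc (0:ℝ) c', |igr r0 Ω P a s| ≤ M₀ := by
    intro s hs; have := hM₀n s hs; rwa [Real.norm_eq_abs] at this
  have hc0 : 0 ≤ c := hρst.1.trans hρst.2
  have hc'0 : 0 ≤ c' := hc0.trans (le_max_left _ _)
  have hM₀0 : 0 ≤ M₀ := (abs_nonneg _).trans (hM₀ 0 ⟨le_rfl, hc'0⟩)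
  set E := eFun r0 c' with hEdef
  have hE : 0 ≤ E := eFun_nonneg _ _
  have hH0 : 0 ≤ H := ha.1.trans ha.2
  set M := M₀ + R0 * H * E with hMdef
  have hM0 : 0 ≤ M := by
    have : 0 ≤ R0 * H * E := mul_nonneg (mul_nonneg hR0.le hH0) hE
    linarith
  set K := M + 2 * (R0 * E * c') + 1 with hKdef
  have hREc : 0 ≤ R0 * E * c' := mul_nonneg (mul_nonneg hR0.le hE) hc'0
  have hK : 0 < K := by dsimp [K]; linarith
  have hfinal : ∀ ε > 0, PiFun r0 Ω P ρst a ≤ PiFun r0 Ω P ρ' a + ε := by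
    intro ε hε
    set δ := ε / K with hδdef
    have hδ : 0 < δ := div_pos hε hK
    obtain ⟨z, ρ, hzH, hArg, hρc, hδz, hδρ⟩ := happ δ hδ
    have hρc' : ρ ∈ Set.Icc (0:ℝ) c' := hcc' hρc
    have hρstc' : ρst ∈ Set.Icc (0:ℝ) c' := hcc' hρst
    have hρ'c' : ρ' ∈ Set.Icc (0:ℝ) c' := ⟨hρ'.1, le_max_right _ _⟩
    have h1 := Pi_lip_rho (Ω := Ω) hr0 hR0 hPz hPc ha ha hc' hM₀ hρc' hρstc'
    have h2 := Pi_lip_z (Ω := Ω) hr0 hR0 hPz hPc ha hzH hc' hρc'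
    have h3 : PiFun r0 Ω P ρ z ≤ PiFun r0 Ω P ρ' z := argmin_min hArg ρ' hρ'
    have h4 := Pi_lip_z (Ω := Ω) hr0 hR0 hPz hPc hzH ha hc' hρ'c'
    -- bound the three error terms by multiples of δ
    have e1 : |PiFun r0 Ω P ρst a - PiFun r0 Ω P ρ a| ≤ M * δ := by
      refine h1.trans ?_
      have h := abs_sub_comm ρst ρ ▸ hδρ
      exact mul_le_mul_of_nonneg_left h hM0
    have e2 : |PiFun r0 Ω P ρ a - PiFun r0 Ω P ρ z| ≤ R0 * E * c' * δ := by
      refine h2.trans ?_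
      calc R0 * |z - a| * E * c' = |z - a| * (R0 * E * c') := by ring
        _ ≤ δ * (R0 * E * c') := mul_le_mul_of_nonneg_right hδz hREc
        _ = R0 * E * c' * δ := by ring
    have e4 : |PiFun r0 Ω P ρ' z - PiFun r0 Ω P ρ' a| ≤ R0 * E * c' * δ := by
      refine h4.trans ?_
      calc R0 * |a - z| * E * c' = |a - z| * (R0 * E * c') := by ring
        _ ≤ δ * (R0 * E * c') := by
            refine mul_le_mul_of_nonneg_right ?_ hREc
            rwa [abs_sub_comm]
        _ = R0 * E * c' * δ := by ring
    have hKδ : K * δ = ε := by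
      rw [hδdef, mul_div_cancel₀ _ (ne_of_gt hK)]
    have hsum : M * δ + 2 * (R0 * E * c' * δ) ≤ ε := by
      have : (M + 2 * (R0 * E * c')) * δ ≤ K * δ :=
        mul_le_mul_of_nonneg_right (by dsimp [K]; linarith) hδ.le
      nlinarith
    rw [abs_le] at e1 e2 e4
    linarith [e1.2, e2.2, e4.2]
  by_contra hcon
  push_neg at hcon
  have := hfinal ((PiFun r0 Ω P ρst a - PiFun r0 Ω P ρ' a) / 2) (by linarith)
  linarith

/-- with `ρ⁻, ρ⁺` the min/max minimizer functions and
`𝔞(s) = inf{ z ∈ [z*,H] : ρ⁻(z) ≥ s }`, for every `s ∈ [ρ⁻(z*), ρ⁻(H))` one has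
`𝔞(s) ∈ [z*,H]` and `s ∈ [ρ⁻(𝔞(s)), ρ⁺(𝔞(s))]`; moreover if `s ∈ [ρ⁻(z), ρ⁺(z)]` for some
`z ∈ [z*, H)` then `𝔞(s) = z`. -/
theorem stmt12 (r0 Ω H R0 : ℝ) (hr0 : 0 < r0) (hΩ : 0 < Ω) (hH : 0 < H) (hR0 : 0 < R0)
    (P : ℝ × ℝ → ℝ)
    (hPLip : ∃ K : NNReal, LipschitzOnWith K P
      (Set.Ico (0 : ℝ) (1 / (2 * r0 ^ 2)) ×ˢ Set.Icc (0 : ℝ) H))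
    (hPs : ∀ z ∈ Set.Icc (0 : ℝ) H,
      MonotoneOn (fun s => P (s, z)) (Set.Ico (0 : ℝ) (1 / (2 * r0 ^ 2))) ∧
      LipschitzOnWith (Real.toNNReal R0) (fun s => P (s, z))
        (Set.Ico (0 : ℝ) (1 / (2 * r0 ^ 2))))
    (hPz : ∀ s ∈ Set.Ico (0 : ℝ) (1 / (2 * r0 ^ 2)), ∀ z₁ ∈ Set.Icc (0 : ℝ) H,
      ∀ z₂ ∈ Set.Icc (0 : ℝ) H, z₁ ≤ z₂ →
        (z₂ - z₁) / R0 ≤ P (s, z₂) - P (s, z₁) ∧ P (s, z₂) - P (s, z₁) ≤ R0 * (z₂ - z₁))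
    (zs : ℝ) (hzsH : zs < H)
    (hzs : ({z ∈ Set.Icc (0 : ℝ) H | (0 : ℝ) ∈ ArgminPi r0 Ω P z}.Nonempty →
        zs = sSup {z ∈ Set.Icc (0 : ℝ) H | (0 : ℝ) ∈ ArgminPi r0 Ω P z}) ∧
      (¬{z ∈ Set.Icc (0 : ℝ) H | (0 : ℝ) ∈ ArgminPi r0 Ω P z}.Nonempty → zs = 0))
    (ρm ρp : ℝ → ℝ)
    (hρm : ∀ z ∈ Set.Icc (0 : ℝ) H, IsLeast (ArgminPi r0 Ω P z) (ρm z))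
    (hρp : ∀ z ∈ Set.Icc (0 : ℝ) H, IsGreatest (ArgminPi r0 Ω P z) (ρp z)) :
    ∀ s ∈ Set.Ico (ρm zs) (ρm H),
      (sInf {z | z ∈ Set.Icc zs H ∧ s ≤ ρm z} ∈ Set.Icc zs H ∧
        s ∈ Set.Icc (ρm (sInf {z | z ∈ Set.Icc zs H ∧ s ≤ ρm z}))
          (ρp (sInf {z | z ∈ Set.Icc zs H ∧ s ≤ ρm z}))) ∧
      (∀ z ∈ Set.Ico zs H, s ∈ Set.Icc (ρm z) (ρp z) →
        sInf {z' | z' ∈ Set.Icc zs H ∧ s ≤ ρm z'} = z) := by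
  have hPc : ∀ z ∈ Set.Icc (0:ℝ) H, ContinuousOn (fun s => P (s, z))
      (Set.Ico (0:ℝ) (1 / (2 * r0 ^ 2))) := fun z hz => ((hPs z hz).2).continuousOn
  -- basic facts about zs
  set T := {z ∈ Set.Icc (0 : ℝ) H | (0 : ℝ) ∈ ArgminPi r0 Ω P z} with hTdef
  have hTbdd : BddAbove T := BddAbove.mono (fun z hz => hz.1) bddAbove_Icc
  have hzs0 : 0 ≤ zs := by
    by_cases hT : T.Nonempty
    · obtain ⟨t, ht⟩ := hT
      have := le_csSup hTbdd ht
      rw [hzs.1 ⟨t, ht⟩]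
      exact le_trans ht.1.1 this
    · rw [hzs.2 hT]
  have hno0 : ∀ z ∈ Set.Icc (0:ℝ) H, zs < z → (0:ℝ) ∉ ArgminPi r0 Ω P z := by
    intro z hz hlt hmem
    have hzT : z ∈ T := ⟨hz, hmem⟩
    have := le_csSup hTbdd hzT
    rw [← hzs.1 ⟨z, hzT⟩] at this
    linarith
  have hsubH : Set.Icc zs H ⊆ Set.Icc (0:ℝ) H := Set.Icc_subset_Icc hzs0 le_rfl
  -- monotonicity facts
  have hwm : ∀ z₁ ∈ Set.Icc (0:ℝ) H, ∀ z₂ ∈ Set.Icc (0:ℝ) H, z₁ ≤ z₂ → ρm z₁ ≤ ρm z₂ := by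
    intro z₁ h₁ z₂ h₂ hle
    rcases eq_or_lt_of_le hle with rfl | hlt
    · exact le_rfl
    · exact weak_mono hr0 hR0 hPz hPc h₁ h₂ hlt (hρm z₁ h₁).1 (hρm z₂ h₂).1
  have hsm : ∀ z₁ ∈ Set.Icc zs H, ∀ z₂ ∈ Set.Icc zs H, z₁ < z₂ → ρp z₁ < ρm z₂ := by
    intro z₁ h₁ z₂ h₂ hlt
    exact strict_mono' hr0 hR0 hPz hPc (hsubH h₁) (hsubH h₂) hlt
      (hρp z₁ (hsubH h₁)).1 (hρm z₂ (hsubH h₂)).1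
      (hno0 z₂ (hsubH h₂) (lt_of_le_of_lt h₁.1 hlt))
  have hmem_ρm : ∀ z ∈ Set.Icc (0:ℝ) H, ρm z ∈ Set.Ico (0:ℝ) (1 / (2 * r0 ^ 2)) :=
    fun z hz => argmin_mem (hρm z hz).1
  have hmle : ∀ z ∈ Set.Icc (0:ℝ) H, ρm z ≤ ρp z :=
    fun z hz => (hρp z hz).2 (hρm z hz).1
  have hzsIcc : zs ∈ Set.Icc (0:ℝ) H := ⟨hzs0, hzsH.le⟩
  have hHIcc : H ∈ Set.Icc (0:ℝ) H := ⟨hH.le, le_rfl⟩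
  intro s hs
  set S := {z | z ∈ Set.Icc zs H ∧ s ≤ ρm z} with hSdef
  have hHS : H ∈ S := ⟨⟨hzsH.le, le_rfl⟩, hs.2.le⟩
  have hSne : S.Nonempty := ⟨H, hHS⟩
  have hSbdd : BddBelow S := ⟨zs, fun z hz => hz.1.1⟩
  have haZ : zs ≤ sInf S := le_csInf hSne (fun z hz => hz.1.1)
  have haH : sInf S ≤ H := csInf_le hSbdd hHS
  set a := sInf S with hadef
  have haIcc : a ∈ Set.Icc zs H := ⟨haZ, haH⟩
  have haIcc0 : a ∈ Set.Icc (0:ℝ) H := hsubH haIcc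
  have hs0 : 0 ≤ s := le_trans (hmem_ρm zs hzsIcc).1 hs.1
  -- Part 2
  have part2 : ∀ z ∈ Set.Ico zs H, s ∈ Set.Icc (ρm z) (ρp z) → sInf S = z := by
    intro z hz hsz
    have hzIcc : z ∈ Set.Icc zs H := ⟨hz.1, hz.2.le⟩
    have hge : z ≤ sInf S := by
      apply le_csInf hSne
      intro w hw
      by_contra hcon
      push_neg at hcon
      have h1 : ρp w < ρm z := hsm w hw.1 z hzIcc hcon
      have h2 : ρm w ≤ ρp w := hmle w (hsubH hw.1)
      have h3 : s ≤ ρm w := hw.2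
      linarith [hsz.1]
    have hle : ∀ ε > (0:ℝ), sInf S ≤ z + ε := by
      intro ε hε
      set w := min (z + ε) H with hwdef
      have hzw : z < w := lt_min (by linarith) hz.2
      have hwIcc : w ∈ Set.Icc zs H := ⟨le_min (by linarith [hz.1]) hzsH.le, min_le_right _ _⟩
      have hwS : w ∈ S := ⟨hwIcc, le_of_lt (lt_of_le_of_lt hsz.2 (hsm z hzIcc w hwIcc hzw))⟩
      exact le_trans (csInf_le hSbdd hwS) (min_le_left _ _)
    have : sInf S ≤ z := by
      by_contra hcon
      push_neg at hcon
      have := hle ((sInf S - z) / 2) (by linarith)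
      linarith
    exact le_antisymm this hge
  refine ⟨⟨haIcc, ?_⟩, part2⟩
  -- Part 1 : s ∈ [ρm a, ρp a]
  by_cases hin : a ∈ S
  · -- a ∈ S : s ≤ ρm a; show ρm a ≤ s
    refine ⟨?_, le_trans hin.2 (hmle a haIcc0)⟩
    rcases eq_or_lt_of_le haZ with heq | hlt
    · rw [← heq]; exact hs.1
    -- zs < a : left-limit argument
    set R := ρm '' Set.Ico zs a with hRdef
    have hRne : R.Nonempty := ⟨ρm zs, zs, ⟨le_rfl, hlt⟩, rfl⟩
    have hRbdd : BddAbove R := by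
      refine ⟨ρm a, ?_⟩
      rintro x ⟨w, hw, rfl⟩
      exact hwm w (hsubH ⟨hw.1, hw.2.le.trans haH⟩) a haIcc0 hw.2.le
    set ρst := sSup R with hρstdef
    have hρst_le : ρst ≤ ρm a := by
      apply csSup_le hRne
      rintro x ⟨w, hw, rfl⟩
      exact hwm w (hsubH ⟨hw.1, hw.2.le.trans haH⟩) a haIcc0 hw.2.le
    have hρst_s : ρst ≤ s := by
      apply csSup_le hRne
      rintro x ⟨w, hw, rfl⟩
      have hwIcc : w ∈ Set.Icc zs H := ⟨hw.1, hw.2.le.trans haH⟩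
      have hwnS : w ∉ S := fun hmem => absurd (csInf_le hSbdd hmem) (not_le.mpr hw.2)
      have : ¬ s ≤ ρm w := fun h => hwnS ⟨hwIcc, h⟩
      linarith [not_le.mp this]
    have hρst0 : 0 ≤ ρst := le_trans (hmem_ρm zs hzsIcc).1
      (le_csSup hRbdd ⟨zs, ⟨le_rfl, hlt⟩, rfl⟩)
    have hρstArg : ρst ∈ ArgminPi r0 Ω P a := by
      apply limit_argmin hr0 hR0 hPz hPc haIcc0 (hmem_ρm a haIcc0).2 ⟨hρst0, hρst_le⟩
      intro δ hδ
      obtain ⟨x, ⟨w, hw, rfl⟩, hx⟩ := exists_lt_of_lt_csSup hRne (by linarith : ρst - δ < ρst)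
      set w' := max w (a - δ) with hw'def
      have hw'mem : w' ∈ Set.Ico zs a := ⟨le_max_of_le_left hw.1, max_lt hw.2 (by linarith)⟩
      have hw'Icc : w' ∈ Set.Icc (0:ℝ) H :=
        hsubH ⟨hw'mem.1, hw'mem.2.le.trans haH⟩
      refine ⟨w', ρm w', hw'Icc, (hρm w' hw'Icc).1, ⟨(hmem_ρm w' hw'Icc).1,
        hwm w' hw'Icc a haIcc0 hw'mem.2.le⟩, ?_, ?_⟩
      · rw [abs_le]
        constructor
        · have := le_max_right w (a - δ); linarith
        · linarith [hw'mem.2]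
      · rw [abs_le]
        have h1 : ρm w ≤ ρm w' := hwm w (hsubH ⟨hw.1, hw.2.le.trans haH⟩) w' hw'Icc
          (le_max_left _ _)
        have h2 : ρm w' ≤ ρst := le_csSup hRbdd ⟨w', hw'mem, rfl⟩
        constructor <;> linarith
    exact (hρm a haIcc0).2 hρstArg |>.trans hρst_s
  · -- a ∉ S : ρm a < s ; show s ≤ ρp a
    have hma : ρm a < s := by
      by_contra hcon
      push_neg at hcon
      exact hin ⟨haIcc, hcon⟩
    have haltH : a < H := lt_of_le_of_ne haH (fun h => hin (h ▸ hHS))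
    refine ⟨hma.le, ?_⟩
    set R := ρm '' Set.Ioc a H with hRdef
    have hRne : R.Nonempty := ⟨ρm H, H, ⟨haltH, le_rfl⟩, rfl⟩
    have hIocIcc : ∀ w ∈ Set.Ioc a H, w ∈ Set.Icc (0:ℝ) H :=
      fun w hw => ⟨le_trans haIcc0.1 hw.1.le, hw.2⟩
    have hRlb : ∀ x ∈ R, s ≤ x := by
      rintro x ⟨w, hw, rfl⟩
      obtain ⟨v, hv, hvw⟩ := exists_lt_of_csInf_lt hSne (hw.1 : sInf S < w)
      exact le_trans hv.2 (hwm v (hsubH hv.1) w (hIocIcc w hw) hvw.le)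
    have hRbdd : BddBelow R := ⟨s, hRlb⟩
    set ρst := sInf R with hρstdef
    have hρst_s : s ≤ ρst := le_csInf hRne hRlb
    have hρst_le : ρst ≤ ρm H := csInf_le hRbdd ⟨H, ⟨haltH, le_rfl⟩, rfl⟩
    have hρst0 : 0 ≤ ρst := le_trans hs0 hρst_s
    have hρstArg : ρst ∈ ArgminPi r0 Ω P a := by
      apply limit_argmin hr0 hR0 hPz hPc haIcc0 (hmem_ρm H hHIcc).2 ⟨hρst0, hρst_le⟩
      intro δ hδ
      obtain ⟨x, ⟨w, hw, rfl⟩, hx⟩ := exists_lt_of_csInf_lt hRne (by linarith : ρst < ρst + δ)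
      set w' := min w (a + δ) with hw'def
      have hw'mem : w' ∈ Set.Ioc a H := ⟨lt_min hw.1 (by linarith),
        le_trans (min_le_left _ _) hw.2⟩
      have hw'Icc : w' ∈ Set.Icc (0:ℝ) H := hIocIcc w' hw'mem
      refine ⟨w', ρm w', hw'Icc, (hρm w' hw'Icc).1, ⟨(hmem_ρm w' hw'Icc).1,
        hwm w' hw'Icc H hHIcc hw'mem.2⟩, ?_, ?_⟩
      · rw [abs_le]
        constructor
        · linarith [hw'mem.1.le]
        · have := min_le_right w (a + δ); linarith
      · rw [abs_le]
        have h1 : ρm w' ≤ ρm w := hwm w' hw'Icc w (hIocIcc w hw) (min_le_left _ _)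
        have h2 : ρst ≤ ρm w' := csInf_le hRbdd ⟨w', hw'mem, rfl⟩
        constructor <;> linarith
    exact le_trans hρst_s ((hρp a haIcc0).2 hρstArg)
end

section
/- (Lipschitz continuity of the inverse free-boundary function.) Under the hypotheses of the previous statement, the function 𝔞 : [0, ρ⁻(H)] → [z*, H] defined by 𝔞(s) = inf{ z ∈ [z*, H] : ρ⁻(z) ≥ s } is Lipschitz continuous with Lipschitz constant at most c₀ (the constant from the reverse Lipschitz estimate z₂ − z₁ ≤ c₀(ρ₂ − ρ₁)). -/
open MeasureTheory

/-- Lipschitz continuity of the inverse free-boundary function: under the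
hypotheses of the previous statement, if `c₀ > 0` realizes the reverse Lipschitz estimate
`z₂ − z₁ ≤ c₀(ρ₂ − ρ₁)` for minimizers, then `𝔞(s) = inf{ z ∈ [z*,H] : ρ⁻(z) ≥ s }` is
`c₀`-Lipschitz on `[0, ρ⁻(H)]`. -/
theorem stmt13 (r0 Ω H R0 : ℝ) (hr0 : 0 < r0) (hΩ : 0 < Ω) (hH : 0 < H) (hR0 : 0 < R0)
    (P : ℝ × ℝ → ℝ)
    (hPLip : ∃ K : NNReal, LipschitzOnWith K P
      (Set.Ico (0 : ℝ) (1 / (2 * r0 ^ 2)) ×ˢ Set.Icc (0 : ℝ) H))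
    (hPs : ∀ z ∈ Set.Icc (0 : ℝ) H,
      MonotoneOn (fun s => P (s, z)) (Set.Ico (0 : ℝ) (1 / (2 * r0 ^ 2))) ∧
      LipschitzOnWith (Real.toNNReal R0) (fun s => P (s, z))
        (Set.Ico (0 : ℝ) (1 / (2 * r0 ^ 2))))
    (hPz : ∀ s ∈ Set.Ico (0 : ℝ) (1 / (2 * r0 ^ 2)), ∀ z₁ ∈ Set.Icc (0 : ℝ) H,
      ∀ z₂ ∈ Set.Icc (0 : ℝ) H, z₁ ≤ z₂ →
        (z₂ - z₁) / R0 ≤ P (s, z₂) - P (s, z₁) ∧ P (s, z₂) - P (s, z₁) ≤ R0 * (z₂ - z₁))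
    (zs : ℝ) (hzsH : zs < H)
    (hzs : ({z ∈ Set.Icc (0 : ℝ) H | (0 : ℝ) ∈ ArgminPi r0 Ω P z}.Nonempty →
        zs = sSup {z ∈ Set.Icc (0 : ℝ) H | (0 : ℝ) ∈ ArgminPi r0 Ω P z}) ∧
      (¬{z ∈ Set.Icc (0 : ℝ) H | (0 : ℝ) ∈ ArgminPi r0 Ω P z}.Nonempty → zs = 0))
    (ρm ρp : ℝ → ℝ)
    (hρm : ∀ z ∈ Set.Icc (0 : ℝ) H, IsLeast (ArgminPi r0 Ω P z) (ρm z))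
    (hρp : ∀ z ∈ Set.Icc (0 : ℝ) H, IsGreatest (ArgminPi r0 Ω P z) (ρp z))
    (c₀ : ℝ) (hc₀ : 0 < c₀)
    (hrev : ∀ z₁ ∈ Set.Icc zs H, ∀ z₂ ∈ Set.Icc zs H, z₁ ≤ z₂ →
      ∀ ρ₁ ∈ ArgminPi r0 Ω P z₁, ∀ ρ₂ ∈ ArgminPi r0 Ω P z₂, z₂ - z₁ ≤ c₀ * (ρ₂ - ρ₁)) :
    ∀ s₁ ∈ Set.Icc (0 : ℝ) (ρm H), ∀ s₂ ∈ Set.Icc (0 : ℝ) (ρm H),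
      |sInf {z | z ∈ Set.Icc zs H ∧ s₂ ≤ ρm z} - sInf {z | z ∈ Set.Icc zs H ∧ s₁ ≤ ρm z}|
        ≤ c₀ * |s₂ - s₁| := by

  have hzs0 : 0 ≤ zs := by
    rcases hzs with ⟨h1, h2⟩
    by_cases hne : {z ∈ Set.Icc (0 : ℝ) H | (0 : ℝ) ∈ ArgminPi r0 Ω P z}.Nonempty
    · obtain ⟨z, hz⟩ := hne
      rw [h1 ⟨z, hz⟩]
      exact hz.1.1.trans (le_csSup ⟨H, fun y hy => hy.1.2⟩ hz)
    · rw [h2 hne]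
  set A : ℝ → Set ℝ := fun s => {z | z ∈ Set.Icc zs H ∧ s ≤ ρm z} with hA
  have hbdd : ∀ s, BddBelow (A s) := fun s => ⟨zs, fun z hz => hz.1.1⟩
  have hneA : ∀ s, s ≤ ρm H → (A s).Nonempty :=
    fun s hs => ⟨H, ⟨⟨hzsH.le, le_refl H⟩, hs⟩⟩
  have key : ∀ s₁ ∈ Set.Icc (0 : ℝ) (ρm H), ∀ s₂ ∈ Set.Icc (0 : ℝ) (ρm H), s₁ ≤ s₂ →
      sInf (A s₁) ≤ sInf (A s₂) ∧ sInf (A s₂) ≤ sInf (A s₁) + c₀ * (s₂ - s₁) := by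
    intro s₁ hs₁ s₂ hs₂ h12
    have hmono : sInf (A s₁) ≤ sInf (A s₂) :=
      csInf_le_csInf (hbdd s₁) (hneA s₂ hs₂.2) (fun z hz => ⟨hz.1, h12.trans hz.2⟩)
    refine ⟨hmono, ?_⟩
    have hstep : ∀ z₁ ∈ A s₁, sInf (A s₂) ≤ z₁ + c₀ * (s₂ - s₁) := by
      intro z₁ hz₁
      by_cases hle : z₁ + c₀ * (s₂ - s₁) ≤ H
      · have hz1Icc : z₁ ∈ Set.Icc (0 : ℝ) H := ⟨hzs0.trans hz₁.1.1, hz₁.1.2⟩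
        have hΔ : 0 ≤ c₀ * (s₂ - s₁) := mul_nonneg hc₀.le (by linarith)
        have hz2ge : z₁ ≤ z₁ + c₀ * (s₂ - s₁) := by linarith
        have hz2Icc0 : z₁ + c₀ * (s₂ - s₁) ∈ Set.Icc (0 : ℝ) H :=
          ⟨by linarith [hz1Icc.1], hle⟩
        have hz2zs : z₁ + c₀ * (s₂ - s₁) ∈ Set.Icc zs H := ⟨hz₁.1.1.trans hz2ge, hle⟩
        have hrv := hrev z₁ hz₁.1 _ hz2zs hz2ge _ (hρm _ hz1Icc).1 _ (hρm _ hz2Icc0).1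
        have hd : s₂ - s₁ ≤ ρm (z₁ + c₀ * (s₂ - s₁)) - ρm z₁ := by
          have : c₀ * (s₂ - s₁) ≤ c₀ * (ρm (z₁ + c₀ * (s₂ - s₁)) - ρm z₁) := by linarith
          exact le_of_mul_le_mul_left this hc₀
        exact csInf_le (hbdd s₂) ⟨hz2zs, by linarith [hz₁.2]⟩
      · have := csInf_le (hbdd s₂) (hneA s₂ hs₂.2).choose_spec
        have hH2 : sInf (A s₂) ≤ H := csInf_le (hbdd s₂) ⟨⟨hzsH.le, le_refl H⟩, hs₂.2⟩
        linarith
    have : sInf (A s₂) - c₀ * (s₂ - s₁) ≤ sInf (A s₁) :=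
      le_csInf (hneA s₁ hs₁.2) (fun z hz => by linarith [hstep z hz])
    linarith
  intro s₁ hs₁ s₂ hs₂
  rcases le_total s₁ s₂ with h | h
  · obtain ⟨h1, h2⟩ := key s₁ hs₁ s₂ hs₂ h
    rw [abs_of_nonneg (by linarith : (0:ℝ) ≤ sInf (A s₂) - sInf (A s₁)),
      abs_of_nonneg (by linarith : (0:ℝ) ≤ s₂ - s₁)]
    linarith
  · obtain ⟨h1, h2⟩ := key s₂ hs₂ s₁ hs₁ h
    rw [abs_of_nonpos (by linarith : sInf (A s₂) - sInf (A s₁) ≤ 0),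
      abs_of_nonpos (by linarith : s₂ - s₁ ≤ 0)]
    linarith
end

section
/- (Weak duality.) Let σ be a Borel probability measure supported in Δ ⊂ [0,R₀]². For (P, Ψ) ∈ 𝒰₀ (convex conjugates of each other, so P(p) + Ψ(q) ≥ ⟨p,q⟩ on 𝒟 × ℝ₊²), and for any pair (ρ, γ) with ρ : [0,H] → [0, 1/(2r0²)) Borel, ∫_{D_ρ} e(s) ds dz = 1, and γ a transport plan between e(s)χ_{D_ρ} ℒ² and σ, one has J[σ](Ψ, P) ≤ I(ρ, γ), where I(ρ,γ) = ∫_{D_ρ × Δ} ( −⟨p,q⟩ + Υ/(2r0²) − Ω√Υ + r0²Ω²/(2(1−2r0² s)) ) γ(dp,dq) and J[σ](Ψ,P) = ∫ (Υ/(2r0²) − Ω√Υ − Ψ) dσ + inf_{ρ̃} ∫_0^H Π_P(ρ̃(z), z) dz. -/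
open MeasureTheory NNReal ENNReal

/-- The domain `𝒟 = [0, 1/(2r0²)) × [0,H]`. -/
def Dom (r0 H : ℝ) : Set (ℝ × ℝ) := Set.Ico (0 : ℝ) (1 / (2 * r0 ^ 2)) ×ˢ Set.Icc (0 : ℝ) H

/-- `(P,Ψ) ∈ 𝒰₀`: conjugate pair with Fenchel–Young inequality. -/
def memU0 (r0 H : ℝ) (Δ : Set (ℝ × ℝ)) (P Ψ : ℝ × ℝ → ℝ) : Prop :=
  (∀ p ∈ Dom r0 H, P p = sSup ((fun q : ℝ × ℝ => p.1 * q.1 + p.2 * q.2 - Ψ q) '' Δ)) ∧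
  (∀ q : ℝ × ℝ, 0 ≤ q.1 → 0 ≤ q.2 →
    Ψ q = sSup ((fun p : ℝ × ℝ => p.1 * q.1 + p.2 * q.2 - P p) '' Dom r0 H)) ∧
  (∀ p ∈ Dom r0 H, ∀ q : ℝ × ℝ, 0 ≤ q.1 → 0 ≤ q.2 →
    p.1 * q.1 + p.2 * q.2 ≤ P p + Ψ q)

/-- `D_ρ = { (s,z) : 0 ≤ s ≤ ρ(z), z ∈ [0,H] }`. -/
def Dset (H : ℝ) (ρ : ℝ → ℝ) : Set (ℝ × ℝ) :=
  {p : ℝ × ℝ | p.2 ∈ Set.Icc (0 : ℝ) H ∧ p.1 ∈ Set.Icc (0 : ℝ) (ρ p.2)}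

/-- The measure `e(s) χ_{D_ρ} ℒ²`. -/
noncomputable def muD (r0 H : ℝ) (ρ : ℝ → ℝ) : Measure (ℝ × ℝ) :=
  MeasureTheory.volume.withDensity
    (fun p => ENNReal.ofReal ((Dset H ρ).indicator (fun p : ℝ × ℝ => eFun r0 p.1) p))

/-- The transport cost `−⟨p,q⟩ + Υ/(2r0²) − Ω√Υ + r0²Ω²/(2(1−2r0² s))`. -/
noncomputable def cost (r0 Ω : ℝ) (pq : (ℝ × ℝ) × (ℝ × ℝ)) : ℝ :=
  -(pq.1.1 * pq.2.1 + pq.1.2 * pq.2.2) + pq.2.1 / (2 * r0 ^ 2)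
    - Ω * Real.sqrt pq.2.1 + r0 ^ 2 * Ω ^ 2 / (2 * (1 - 2 * r0 ^ 2 * pq.1.1))

/-- `j(P) = inf_{ρt ∈ ℋ₀} ∫_0^H Π_P(ρt(z), z) dz`. -/
noncomputable def jP (r0 Ω H : ℝ) (P : ℝ × ℝ → ℝ) : ℝ :=
  sInf {x : ℝ | ∃ ρt : ℝ → ℝ, Measurable ρt ∧
    (∀ z, ρt z ∈ Set.Ico (0 : ℝ) (1 / (2 * r0 ^ 2))) ∧
    x = ∫ z in (0 : ℝ)..H, PiFun r0 Ω P (ρt z) z}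

/-- `J[σ](Ψ,P) = ∫ (Υ/(2r0²) − Ω√Υ − Ψ) dσ + j(P)`. -/
noncomputable def Jfun (r0 Ω H : ℝ) (σ : Measure (ℝ × ℝ)) (Ψ P : ℝ × ℝ → ℝ) : ℝ :=
  (∫ q : ℝ × ℝ, (q.1 / (2 * r0 ^ 2) - Ω * Real.sqrt q.1 - Ψ q) ∂σ) + jP r0 Ω H P

/-! ### Auxiliary machinery -/

/-- The convex-conjugate formula appearing in `memU0`. -/
noncomputable def phiA (Ψ : ℝ × ℝ → ℝ) (Δ : Set (ℝ × ℝ)) (p : ℝ × ℝ) : ℝ :=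
  sSup ((fun q : ℝ × ℝ => p.1 * q.1 + p.2 * q.2 - Ψ q) '' Δ)

/-- The function `G(p) = r0²Ω²/(2(1−2r0² s)) − φ(p)`. -/
noncomputable def GFun (r0 Ω : ℝ) (Ψ : ℝ × ℝ → ℝ) (Δ : Set (ℝ × ℝ)) (p : ℝ × ℝ) : ℝ :=
  r0 ^ 2 * Ω ^ 2 / (2 * (1 - 2 * r0 ^ 2 * p.1)) - phiA Ψ Δ p

/-- The density of `muD` as a real-valued function. -/
noncomputable def dInd (r0 H : ℝ) (ρ : ℝ → ℝ) : ℝ × ℝ → ℝ :=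
  (Dset H ρ).indicator (fun p => eFun r0 p.1)

lemma phiA_bddAbove (R0 P0 : ℝ) (Δ : Set (ℝ × ℝ))
    (hΔ : Δ ⊆ Set.Icc ((0 : ℝ), (0 : ℝ)) (R0, R0)) (Ψ : ℝ × ℝ → ℝ)
    (hΨlb : ∀ q ∈ Δ, -P0 ≤ Ψ q) (p : ℝ × ℝ) :
    ((fun q : ℝ × ℝ => p.1 * q.1 + p.2 * q.2 - Ψ q) '' Δ) ⊆
      Set.Iic (|p.1| * R0 + |p.2| * R0 + P0) := by
  rintro x ⟨q, hq, rfl⟩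
  obtain ⟨⟨h1, h2⟩, h3, h4⟩ := hΔ hq
  have hΨ := hΨlb q hq
  have e1 : p.1 * q.1 ≤ |p.1| * R0 :=
    mul_le_mul (le_abs_self _) h3 h1 (abs_nonneg _)
  have e2 : p.2 * q.2 ≤ |p.2| * R0 :=
    mul_le_mul (le_abs_self _) h4 h2 (abs_nonneg _)
  simp only [Set.mem_Iic]
  linarith

lemma phiA_continuous (R0 P0 : ℝ) (hR0 : 0 < R0) (Δ : Set (ℝ × ℝ))
    (hΔ : Δ ⊆ Set.Icc ((0 : ℝ), (0 : ℝ)) (R0, R0)) (Ψ : ℝ × ℝ → ℝ)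
    (hΨlb : ∀ q ∈ Δ, -P0 ≤ Ψ q) : Continuous (phiA Ψ Δ) := by
  rcases Set.eq_empty_or_nonempty Δ with hΔe | hΔne
  · have : phiA Ψ Δ = fun _ => 0 := by
      funext p; simp [phiA, hΔe, Real.sSup_empty]
    rw [this]; exact continuous_const
  · have key : ∀ p p' : ℝ × ℝ, phiA Ψ Δ p ≤ phiA Ψ Δ p' + 2 * R0 * dist p p' := by
      intro p p'
      apply csSup_le (hΔne.image _)
      rintro x ⟨q, hq, rfl⟩
      show p.1 * q.1 + p.2 * q.2 - Ψ q ≤ _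
      obtain ⟨⟨h1, h2⟩, h3, h4⟩ := hΔ hq
      have hb' : BddAbove ((fun q : ℝ × ℝ => p'.1 * q.1 + p'.2 * q.2 - Ψ q) '' Δ) :=
        ⟨_, phiA_bddAbove R0 P0 Δ hΔ Ψ hΨlb p'⟩
      have hmem : p'.1 * q.1 + p'.2 * q.2 - Ψ q ≤ phiA Ψ Δ p' :=
        le_csSup hb' ⟨q, hq, rfl⟩
      have hd1 : |p.1 - p'.1| ≤ dist p p' := by
        rw [← Real.dist_eq, Prod.dist_eq]; exact le_max_left _ _
      have hd2 : |p.2 - p'.2| ≤ dist p p' := by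
        rw [← Real.dist_eq, Prod.dist_eq]; exact le_max_right _ _
      have e1 : (p.1 - p'.1) * q.1 ≤ dist p p' * R0 :=
        mul_le_mul (le_trans (le_abs_self _) hd1) h3 h1 dist_nonneg
      have e2 : (p.2 - p'.2) * q.2 ≤ dist p p' * R0 :=
        mul_le_mul (le_trans (le_abs_self _) hd2) h4 h2 dist_nonneg
      nlinarith [hmem]
    have hlip : LipschitzWith (Real.toNNReal (2 * R0)) (phiA Ψ Δ) := by
      apply LipschitzWith.of_dist_le_mul
      intro p p'
      rw [Real.dist_eq]
      have hcoe : ((Real.toNNReal (2 * R0) : ℝ≥0) : ℝ) = 2 * R0 :=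
        Real.coe_toNNReal _ (by linarith)
      rw [hcoe, abs_sub_le_iff]
      constructor
      · linarith [key p p']
      · have := key p' p; rw [dist_comm] at this; linarith
    exact hlip.continuous

lemma quad_lb (a b x : ℝ) (ha : 0 < a) (hb : 0 ≤ b) :
    -(b ^ 2 / (4 * a) + a) ≤ a * x ^ 2 - b * x - a + b := by
  have h : b ^ 2 / (4 * a) * (4 * a) = b ^ 2 := div_mul_cancel₀ _ (by positivity)
  nlinarith [sq_nonneg (2 * a * x - b), h, ha, hb]

lemma lb_intable (r0 Ω C1 : ℝ) (hr0 : 0 < r0) {r : ℝ} (hr : 0 ≤ r)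
    (hrc : 2 * r * r0 ^ 2 < 1) :
    IntervalIntegrable
      (fun s => (Ω ^ 2 * r0 ^ 2 / (2 * (1 - 2 * s * r0 ^ 2)) - C1) * eFun r0 s)
      volume 0 r := by
  have hupos : ∀ s ∈ Set.uIcc (0 : ℝ) r, 0 < 1 - 2 * s * r0 ^ 2 := by
    intro s hs
    rw [Set.uIcc_of_le hr] at hs
    nlinarith [hs.1, hs.2, sq_nonneg r0]
  apply ContinuousOn.intervalIntegrable
  unfold eFun
  apply ContinuousOn.mul
  · apply ContinuousOn.sub _ continuousOn_const
    exact continuousOn_const.div (by fun_prop) (fun s hs => by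
      have := hupos s hs; positivity)
  · exact continuousOn_const.div (by fun_prop) (fun s hs => by
      have := hupos s hs; positivity)

lemma ftc_lb (r0 Ω C1 : ℝ) (hr0 : 0 < r0) (hΩ : 0 < Ω) (hC1 : 0 ≤ C1)
    {r : ℝ} (hr : 0 ≤ r) (hrc : 2 * r * r0 ^ 2 < 1) :
    -((C1 * r0 ^ 2 / 2) ^ 2 / (4 * (Ω ^ 2 * r0 ^ 4 / 8)) + Ω ^ 2 * r0 ^ 4 / 8) ≤
      ∫ s in (0 : ℝ)..r, (Ω ^ 2 * r0 ^ 2 / (2 * (1 - 2 * s * r0 ^ 2)) - C1) * eFun r0 s := by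
  set a : ℝ := Ω ^ 2 * r0 ^ 4 / 8 with ha_def
  set b : ℝ := C1 * r0 ^ 2 / 2 with hb_def
  have ha : 0 < a := by positivity
  have hb : 0 ≤ b := by positivity
  have hupos : ∀ s ∈ Set.uIcc (0 : ℝ) r, 0 < 1 - 2 * s * r0 ^ 2 := by
    intro s hs
    rw [Set.uIcc_of_le hr] at hs
    nlinarith [hs.1, hs.2, sq_nonneg r0]
  have hint := lb_intable r0 Ω C1 hr0 hr hrc
  have hftc : ∫ s in (0 : ℝ)..r,
      (Ω ^ 2 * r0 ^ 2 / (2 * (1 - 2 * s * r0 ^ 2)) - C1) * eFun r0 s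
      = (a / (1 - 2 * r * r0 ^ 2) ^ 2 - b / (1 - 2 * r * r0 ^ 2)) - (a - b) := by
    have := intervalIntegral.integral_eq_sub_of_hasDerivAt
      (f := fun s => a / (1 - 2 * s * r0 ^ 2) ^ 2 - b / (1 - 2 * s * r0 ^ 2))
      (f' := fun s => (Ω ^ 2 * r0 ^ 2 / (2 * (1 - 2 * s * r0 ^ 2)) - C1) * eFun r0 s)
      (a := 0) (b := r) ?_ hint
    · rw [this]; norm_num
    · intro s hs
      have hu := hupos s hs
      have hune : 1 - 2 * s * r0 ^ 2 ≠ 0 := ne_of_gt hu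
      have hu' : HasDerivAt (fun s : ℝ => 1 - 2 * s * r0 ^ 2) (-(2 * r0 ^ 2)) s := by
        have h1 : HasDerivAt (fun s : ℝ => 2 * s) 2 s := by
          simpa using (hasDerivAt_id s).const_mul 2
        have h2 : HasDerivAt (fun s : ℝ => 2 * s * r0 ^ 2) (2 * r0 ^ 2) s := h1.mul_const _
        have h3 := (hasDerivAt_const s (1 : ℝ)).sub h2
        simp only [zero_sub] at h3
        exact h3
      have hK1 : HasDerivAt (fun s : ℝ => a / (1 - 2 * s * r0 ^ 2) ^ 2)
          ((0 * (1 - 2 * s * r0 ^ 2) ^ 2 -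
            a * (↑2 * (1 - 2 * s * r0 ^ 2) ^ 1 * -(2 * r0 ^ 2))) /
            ((1 - 2 * s * r0 ^ 2) ^ 2) ^ 2) s :=
        (hasDerivAt_const s a).div (hu'.pow 2) (pow_ne_zero _ hune)
      have hK2 : HasDerivAt (fun s : ℝ => b / (1 - 2 * s * r0 ^ 2))
          ((0 * (1 - 2 * s * r0 ^ 2) - b * -(2 * r0 ^ 2)) / (1 - 2 * s * r0 ^ 2) ^ 2) s :=
        (hasDerivAt_const s b).div hu' hune
      have hK := hK1.sub hK2
      convert hK using 1
      · rfl
      unfold eFun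
      rw [ha_def, hb_def]
      have hu3 : 1 - r0 ^ 2 * 2 * s ≠ 0 := by rw [mul_comm (r0 ^ 2) 2, mul_right_comm]; exact hune
      field_simp [hu3]
      ring
  rw [hftc]
  have hur : 0 < 1 - 2 * r * r0 ^ 2 := by nlinarith
  set x : ℝ := (1 - 2 * r * r0 ^ 2)⁻¹ with hx_def
  have h1 : a / (1 - 2 * r * r0 ^ 2) ^ 2 = a * x ^ 2 := by
    rw [hx_def]; field_simp
  have h2 : b / (1 - 2 * r * r0 ^ 2) = b * x := by
    rw [hx_def]; field_simp
  rw [h1, h2]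
  have := quad_lb a b x ha hb
  linarith

/-- weak duality: for `(P,Ψ) ∈ 𝒰₀` and any admissible pair `(ρ, γ)` of a
free-boundary function and a transport plan between `e χ_{D_ρ} ℒ²` and `σ`,
`J[σ](Ψ,P) ≤ I(ρ,γ) = ∫ cost dγ`. -/
theorem stmt15 (r0 Ω H R0 : ℝ) (hr0 : 0 < r0) (hΩ : 0 < Ω) (hH : 0 < H) (hR0 : 1 < R0)
    (Δ : Set (ℝ × ℝ)) (hΔcl : IsClosed Δ) (hΔ : Δ ⊆ Set.Icc (0, 0) (R0, R0))
    (σ : Measure (ℝ × ℝ)) [IsProbabilityMeasure σ] (hσΔ : σ Δᶜ = 0)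
    (P Ψ : ℝ × ℝ → ℝ) (hU0 : memU0 r0 H Δ P Ψ)
    (ρ : ℝ → ℝ) (hρmeas : Measurable ρ)
    (hρ : ∀ z ∈ Set.Icc (0 : ℝ) H, ρ z ∈ Set.Ico (0 : ℝ) (1 / (2 * r0 ^ 2)))
    (hmass : muD r0 H ρ Set.univ = 1)
    (γ : Measure ((ℝ × ℝ) × (ℝ × ℝ)))
    (hγ1 : γ.map Prod.fst = muD r0 H ρ) (hγ2 : γ.map Prod.snd = σ)
    (hcost : Integrable (cost r0 Ω) γ)
    (hΨint : Integrable (fun q : ℝ × ℝ => q.1 / (2 * r0 ^ 2) - Ω * Real.sqrt q.1 - Ψ q) σ) :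
    Jfun r0 Ω H σ Ψ P ≤ ∫ pq, cost r0 Ω pq ∂γ := by
  classical
  obtain ⟨hU1, hU2, hU3⟩ := hU0
  have hc : (0 : ℝ) < 1 / (2 * r0 ^ 2) := by positivity
  have hdom0 : ((0 : ℝ), (0 : ℝ)) ∈ Dom r0 H := ⟨⟨le_refl _, hc⟩, le_refl _, hH.le⟩
  have hΨlb : ∀ q : ℝ × ℝ, 0 ≤ q.1 → 0 ≤ q.2 → -(P (0, 0)) ≤ Ψ q := by
    intro q h1 h2
    have := hU3 _ hdom0 q h1 h2
    simp only at this
    nlinarith [this]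
  have hqmem : ∀ q ∈ Δ, 0 ≤ q.1 ∧ q.1 ≤ R0 ∧ 0 ≤ q.2 ∧ q.2 ≤ R0 := by
    intro q hq
    obtain ⟨⟨a, b⟩, c', d⟩ := hΔ hq
    exact ⟨a, c', b, d⟩
  have hΨlbΔ : ∀ q ∈ Δ, -(P (0, 0)) ≤ Ψ q := fun q hq =>
    hΨlb q (hqmem q hq).1 (hqmem q hq).2.2.1
  have hPφ : ∀ p ∈ Dom r0 H, P p = phiA Ψ Δ p := hU1
  have hφcont : Continuous (phiA Ψ Δ) :=
    phiA_continuous R0 (P (0, 0)) (by linarith) Δ hΔ Ψ hΨlbΔ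
  set C1 : ℝ := max 0 (1 / (2 * r0 ^ 2) * R0 + H * R0 + P (0, 0)) with hC1_def
  have hC1 : 0 ≤ C1 := le_max_left _ _
  have hφub : ∀ p ∈ Dom r0 H, phiA Ψ Δ p ≤ C1 := by
    intro p hp
    apply Real.sSup_le _ hC1
    rintro x ⟨q, hq, rfl⟩
    obtain ⟨hq1, hq2, hq3, hq4⟩ := hqmem q hq
    obtain ⟨⟨hp1, hp2⟩, hp3, hp4⟩ := hp
    have hΨq := hΨlbΔ q hq
    have e1 : p.1 * q.1 ≤ 1 / (2 * r0 ^ 2) * R0 := mul_le_mul hp2.le hq2 hq1 hc.le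
    have e2 : p.2 * q.2 ≤ H * R0 := mul_le_mul hp4 hq4 hq3 hH.le
    have e3 : 1 / (2 * r0 ^ 2) * R0 + H * R0 + P (0, 0) ≤ C1 := le_max_right _ _
    show p.1 * q.1 + p.2 * q.2 - Ψ q ≤ C1
    linarith
  have hGmeas : Measurable (GFun r0 Ω Ψ Δ) := by
    unfold GFun
    exact (measurable_const.div (by fun_prop)).sub hφcont.measurable
  -- D_ρ measurable, contained in Dom
  have hDmeas : MeasurableSet (Dset H ρ) := by
    have : Dset H ρ = ({p : ℝ × ℝ | 0 ≤ p.2} ∩ {p | p.2 ≤ H}) ∩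
        ({p | 0 ≤ p.1} ∩ {p | p.1 ≤ ρ p.2}) := by
      ext p; simp [Dset, Set.mem_Icc]
    rw [this]
    exact ((measurableSet_le measurable_const measurable_snd).inter
        (measurableSet_le measurable_snd measurable_const)).inter
      ((measurableSet_le measurable_const measurable_fst).inter
        (measurableSet_le measurable_fst (hρmeas.comp measurable_snd)))
  have hDsub : Dset H ρ ⊆ Dom r0 H := fun p hp =>
    ⟨⟨hp.2.1, lt_of_le_of_lt hp.2.2 (hρ _ hp.1).2⟩, hp.1⟩
  have he_nonneg : ∀ s : ℝ, 0 ≤ eFun r0 s := fun s =>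
    div_nonneg (by positivity) (sq_nonneg _)
  have he_meas : Measurable (fun p : ℝ × ℝ => eFun r0 p.1) := by
    unfold eFun; fun_prop
  have hdI_meas : Measurable (dInd r0 H ρ) := he_meas.indicator hDmeas
  have hdI_nonneg : ∀ p, 0 ≤ dInd r0 H ρ p := fun p =>
    Set.indicator_nonneg (fun p _ => he_nonneg p.1) p
  have hmuD : muD r0 H ρ =
      volume.withDensity (fun p => ((Real.toNNReal (dInd r0 H ρ p) : ℝ≥0) : ℝ≥0∞)) := rfl
  -- a.e. facts
  have hae1 : ∀ᵐ pq ∂γ, pq.1 ∈ Dset H ρ := by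
    rw [ae_iff]
    have hset : {pq : (ℝ × ℝ) × (ℝ × ℝ) | ¬pq.1 ∈ Dset H ρ} = Prod.fst ⁻¹' (Dset H ρ)ᶜ := rfl
    rw [hset, ← Measure.map_apply measurable_fst hDmeas.compl, hγ1, muD,
      withDensity_apply _ hDmeas.compl]
    calc ∫⁻ p in (Dset H ρ)ᶜ,
          ENNReal.ofReal ((Dset H ρ).indicator (fun p : ℝ × ℝ => eFun r0 p.1) p)
        = ∫⁻ _ in (Dset H ρ)ᶜ, 0 := by
          apply setLIntegral_congr_fun hDmeas.compl
          exact fun p hp => by simp [Set.indicator_of_notMem hp]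
      _ = 0 := by simp
  have hae2 : ∀ᵐ pq ∂γ, pq.2 ∈ Δ := by
    rw [ae_iff]
    have hset : {pq : (ℝ × ℝ) × (ℝ × ℝ) | ¬pq.2 ∈ Δ} = Prod.snd ⁻¹' Δᶜ := rfl
    rw [hset, ← Measure.map_apply measurable_snd hΔcl.measurableSet.compl, hγ2]
    exact hσΔ
  -- integrability of F ∘ snd
  have hFγ : Integrable
      (fun pq : (ℝ × ℝ) × (ℝ × ℝ) =>
        pq.2.1 / (2 * r0 ^ 2) - Ω * Real.sqrt pq.2.1 - Ψ pq.2) γ := by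
    have h := (integrable_map_measure (f := Prod.snd)
        (g := fun q : ℝ × ℝ => q.1 / (2 * r0 ^ 2) - Ω * Real.sqrt q.1 - Ψ q)
        (by rw [hγ2]; exact hΨint.aestronglyMeasurable)
        measurable_snd.aemeasurable).mp (by rw [hγ2]; exact hΨint)
    exact h
  -- pointwise key inequality
  have hkey : ∀ᵐ pq ∂γ, GFun r0 Ω Ψ Δ pq.1 ≤
      cost r0 Ω pq - (pq.2.1 / (2 * r0 ^ 2) - Ω * Real.sqrt pq.2.1 - Ψ pq.2) := by
    filter_upwards [hae1, hae2] with pq h1 h2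
    have hpD := hDsub h1
    have hq := hqmem pq.2 h2
    have hFY := hU3 pq.1 hpD pq.2 hq.1 hq.2.2.1
    rw [hPφ pq.1 hpD] at hFY
    unfold cost GFun
    linarith
  have hGlbD : ∀ p ∈ Dset H ρ, -C1 ≤ GFun r0 Ω Ψ Δ p := by
    intro p hp
    have hpD := hDsub hp
    have hden : 0 < 1 - 2 * r0 ^ 2 * p.1 := by
      have h1 : p.1 < 1 / (2 * r0 ^ 2) := hpD.1.2
      have h2 : p.1 * (2 * r0 ^ 2) < 1 := (lt_div_iff₀ (by positivity)).mp h1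
      nlinarith
    have hg : 0 ≤ r0 ^ 2 * Ω ^ 2 / (2 * (1 - 2 * r0 ^ 2 * p.1)) := by positivity
    have := hφub p hpD
    unfold GFun
    linarith
  haveI : IsProbabilityMeasure γ := by
    constructor
    have : γ Set.univ = (γ.map Prod.fst) Set.univ := by
      rw [Measure.map_apply measurable_fst MeasurableSet.univ]; rfl
    rw [this, hγ1, hmass]
  have hCF : Integrable (fun pq => cost r0 Ω pq -
      (pq.2.1 / (2 * r0 ^ 2) - Ω * Real.sqrt pq.2.1 - Ψ pq.2)) γ := hcost.sub hFγ
  have hGγ : Integrable (fun pq : (ℝ × ℝ) × (ℝ × ℝ) => GFun r0 Ω Ψ Δ pq.1) γ := by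
    apply Integrable.mono' (hCF.norm.add (integrable_const C1))
      (((hGmeas.comp measurable_fst).aestronglyMeasurable :
        AEStronglyMeasurable (fun pq : (ℝ × ℝ) × (ℝ × ℝ) => GFun r0 Ω Ψ Δ pq.1) γ))
    filter_upwards [hae1, hkey] with pq h1 h3
    have h4 := hGlbD pq.1 h1
    have h5 := le_abs_self (cost r0 Ω pq -
      (pq.2.1 / (2 * r0 ^ 2) - Ω * Real.sqrt pq.2.1 - Ψ pq.2))
    have h6 := abs_nonneg (cost r0 Ω pq -
      (pq.2.1 / (2 * r0 ^ 2) - Ω * Real.sqrt pq.2.1 - Ψ pq.2))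
    simp only [Pi.add_apply, Function.comp_apply, Real.norm_eq_abs]
    rw [abs_le]
    constructor <;> linarith
  -- main integral inequality
  have hmono : ∫ pq, GFun r0 Ω Ψ Δ pq.1 ∂γ ≤ ∫ pq, (cost r0 Ω pq -
      (pq.2.1 / (2 * r0 ^ 2) - Ω * Real.sqrt pq.2.1 - Ψ pq.2)) ∂γ :=
    integral_mono_ae hGγ hCF hkey
  have hsplit : ∫ pq, (cost r0 Ω pq -
      (pq.2.1 / (2 * r0 ^ 2) - Ω * Real.sqrt pq.2.1 - Ψ pq.2)) ∂γ
      = (∫ pq, cost r0 Ω pq ∂γ) -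
        ∫ q : ℝ × ℝ, (q.1 / (2 * r0 ^ 2) - Ω * Real.sqrt q.1 - Ψ q) ∂σ := by
    have hFmap : (∫ q : ℝ × ℝ, (q.1 / (2 * r0 ^ 2) - Ω * Real.sqrt q.1 - Ψ q) ∂σ)
        = ∫ pq, (pq.2.1 / (2 * r0 ^ 2) - Ω * Real.sqrt pq.2.1 - Ψ pq.2) ∂γ := by
      rw [← hγ2]
      exact integral_map measurable_snd.aemeasurable
        (by rw [hγ2]; exact hΨint.aestronglyMeasurable)
    rw [integral_sub hcost hFγ, hFmap]
  have hGmap : ∫ pq, GFun r0 Ω Ψ Δ pq.1 ∂γ = ∫ p, GFun r0 Ω Ψ Δ p ∂(muD r0 H ρ) := by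
    rw [← hγ1, integral_map measurable_fst.aemeasurable hGmeas.aestronglyMeasurable]
  have hGmuD_int : Integrable (GFun r0 Ω Ψ Δ) (muD r0 H ρ) := by
    rw [← hγ1]
    exact (integrable_map_measure hGmeas.aestronglyMeasurable
      measurable_fst.aemeasurable).mpr hGγ
  -- withDensity
  have hWD : ∫ p, GFun r0 Ω Ψ Δ p ∂(muD r0 H ρ)
      = ∫ p, dInd r0 H ρ p * GFun r0 Ω Ψ Δ p ∂(volume : Measure (ℝ × ℝ)) := by
    rw [hmuD, integral_withDensity_eq_integral_smul hdI_meas.real_toNNReal]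
    congr 1
    funext p
    rw [NNReal.smul_def, Real.coe_toNNReal _ (hdI_nonneg p), smul_eq_mul]
  have hW_int : Integrable (fun p => dInd r0 H ρ p * GFun r0 Ω Ψ Δ p)
      (volume : Measure (ℝ × ℝ)) := by
    have h := (integrable_withDensity_iff_integrable_smul
      (hdI_meas.real_toNNReal) (g := GFun r0 Ω Ψ Δ)).mp (by rw [← hmuD]; exact hGmuD_int)
    have : (fun p => (Real.toNNReal (dInd r0 H ρ p)) • GFun r0 Ω Ψ Δ p)
        = fun p => dInd r0 H ρ p * GFun r0 Ω Ψ Δ p := by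
      funext p
      rw [NNReal.smul_def, Real.coe_toNNReal _ (hdI_nonneg p), smul_eq_mul]
    rwa [this] at h
  -- Fubini
  have hprod : (volume : Measure (ℝ × ℝ)) = (volume : Measure ℝ).prod volume :=
    Measure.volume_eq_prod ℝ ℝ
  have hfub : ∫ p, dInd r0 H ρ p * GFun r0 Ω Ψ Δ p ∂(volume : Measure (ℝ × ℝ))
      = ∫ z, (∫ s, dInd r0 H ρ (s, z) * GFun r0 Ω Ψ Δ (s, z)) := by
    rw [hprod]
    exact integral_prod_symm _ (hprod ▸ hW_int)
  have hz_out : ∀ z, z ∉ Set.Icc (0 : ℝ) H →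
      (∫ s, dInd r0 H ρ (s, z) * GFun r0 Ω Ψ Δ (s, z)) = 0 := by
    intro z hz
    have hzero : ∀ s, dInd r0 H ρ (s, z) * GFun r0 Ω Ψ Δ (s, z) = 0 := by
      intro s
      have : ((s, z) : ℝ × ℝ) ∉ Dset H ρ := fun h => hz h.1
      simp [dInd, Set.indicator_of_notMem this]
    simp [hzero]
  have houter : ∫ z, (∫ s, dInd r0 H ρ (s, z) * GFun r0 Ω Ψ Δ (s, z))
      = ∫ z in (0 : ℝ)..H, (∫ s, dInd r0 H ρ (s, z) * GFun r0 Ω Ψ Δ (s, z)) := by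
    rw [intervalIntegral.integral_of_le hH.le, ← integral_Icc_eq_integral_Ioc,
      ← integral_indicator measurableSet_Icc]
    congr 1
    funext z
    by_cases hz : z ∈ Set.Icc (0 : ℝ) H
    · rw [Set.indicator_of_mem hz]
    · rw [Set.indicator_of_notMem hz, hz_out z hz]
  have hslice : ∀ z ∈ Set.Icc (0 : ℝ) H,
      (∫ s, dInd r0 H ρ (s, z) * GFun r0 Ω Ψ Δ (s, z)) = PiFun r0 Ω P (ρ z) z := by
    intro z hz
    have hρz := hρ z hz
    have hind : (fun s => dInd r0 H ρ (s, z) * GFun r0 Ω Ψ Δ (s, z))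
        = (Set.Icc (0 : ℝ) (ρ z)).indicator
            (fun s => eFun r0 s * GFun r0 Ω Ψ Δ (s, z)) := by
      funext s
      by_cases hs : s ∈ Set.Icc (0 : ℝ) (ρ z)
      · have hmem : ((s, z) : ℝ × ℝ) ∈ Dset H ρ := ⟨hz, hs⟩
        rw [Set.indicator_of_mem hs]
        simp [dInd, Set.indicator_of_mem hmem]
      · have hnmem : ((s, z) : ℝ × ℝ) ∉ Dset H ρ := fun h => hs h.2
        rw [Set.indicator_of_notMem hs]
        simp [dInd, Set.indicator_of_notMem hnmem]
    rw [hind, integral_indicator measurableSet_Icc, integral_Icc_eq_integral_Ioc,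
      ← intervalIntegral.integral_of_le hρz.1]
    unfold PiFun
    symm
    apply intervalIntegral.integral_congr
    intro s hs
    rw [Set.uIcc_of_le hρz.1] at hs
    have hsD : ((s, z) : ℝ × ℝ) ∈ Dom r0 H :=
      ⟨⟨hs.1, lt_of_le_of_lt hs.2 hρz.2⟩, hz⟩
    show (Ω ^ 2 * r0 ^ 2 / (2 * (1 - 2 * s * r0 ^ 2)) - P (s, z)) * eFun r0 s
      = eFun r0 s * GFun r0 Ω Ψ Δ (s, z)
    rw [hPφ _ hsD]
    unfold GFun
    show (Ω ^ 2 * r0 ^ 2 / (2 * (1 - 2 * s * r0 ^ 2)) - phiA Ψ Δ (s, z)) * eFun r0 s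
      = eFun r0 s * (r0 ^ 2 * Ω ^ 2 / (2 * (1 - 2 * r0 ^ 2 * s)) - phiA Ψ Δ (s, z))
    have : r0 ^ 2 * Ω ^ 2 / (2 * (1 - 2 * r0 ^ 2 * s))
        = Ω ^ 2 * r0 ^ 2 / (2 * (1 - 2 * s * r0 ^ 2)) := by ring_nf
    rw [this]; ring
  -- lower bound for Π
  set M0 : ℝ := (C1 * r0 ^ 2 / 2) ^ 2 / (4 * (Ω ^ 2 * r0 ^ 4 / 8)) + Ω ^ 2 * r0 ^ 4 / 8
    with hM0_def
  have hM0 : 0 < M0 := by positivity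
  have hPi_lb : ∀ z ∈ Set.Icc (0 : ℝ) H, ∀ r ∈ Set.Ico (0 : ℝ) (1 / (2 * r0 ^ 2)),
      -M0 ≤ PiFun r0 Ω P r z := by
    intro z hz r hr
    have hrc : 2 * r * r0 ^ 2 < 1 := by
      have h2 : r * (2 * r0 ^ 2) < 1 := (lt_div_iff₀ (by positivity)).mp hr.2
      nlinarith
    unfold PiFun
    by_cases hfi : IntervalIntegrable
        (fun s => (Ω ^ 2 * r0 ^ 2 / (2 * (1 - 2 * s * r0 ^ 2)) - P (s, z)) * eFun r0 s)
        volume 0 r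
    · have hlow := ftc_lb r0 Ω C1 hr0 hΩ hC1 hr.1 hrc
      have hmono2 : ∫ s in (0 : ℝ)..r,
            (Ω ^ 2 * r0 ^ 2 / (2 * (1 - 2 * s * r0 ^ 2)) - C1) * eFun r0 s
          ≤ ∫ s in (0 : ℝ)..r,
            (Ω ^ 2 * r0 ^ 2 / (2 * (1 - 2 * s * r0 ^ 2)) - P (s, z)) * eFun r0 s := by
        apply intervalIntegral.integral_mono_on hr.1 (lb_intable r0 Ω C1 hr0 hr.1 hrc) hfi
        intro s hs
        have hsD : ((s, z) : ℝ × ℝ) ∈ Dom r0 H :=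
          ⟨⟨hs.1, lt_of_le_of_lt hs.2 hr.2⟩, hz⟩
        have hPle : P (s, z) ≤ C1 := by rw [hPφ _ hsD]; exact hφub _ hsD
        exact mul_le_mul_of_nonneg_right (by linarith) (he_nonneg s)
      rw [hM0_def]
      linarith
    · rw [intervalIntegral.integral_undef hfi]
      linarith
  -- BddBelow of the admissible set
  have hbdd : BddBelow {x : ℝ | ∃ ρt : ℝ → ℝ, Measurable ρt ∧
      (∀ z, ρt z ∈ Set.Ico (0 : ℝ) (1 / (2 * r0 ^ 2))) ∧
      x = ∫ z in (0 : ℝ)..H, PiFun r0 Ω P (ρt z) z} := by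
    refine ⟨-(M0 * H), ?_⟩
    rintro x ⟨ρt, hm, hvals, rfl⟩
    by_cases hi : IntervalIntegrable (fun z => PiFun r0 Ω P (ρt z) z) volume 0 H
    · have hmono3 : ∫ z in (0 : ℝ)..H, (-M0) ≤ ∫ z in (0 : ℝ)..H, PiFun r0 Ω P (ρt z) z :=
        intervalIntegral.integral_mono_on hH.le intervalIntegrable_const hi
          (fun z hz => hPi_lb z hz (ρt z) (hvals z))
      rw [intervalIntegral.integral_const] at hmono3
      have : -(M0 * H) = (H - 0) • (-M0) := by simp; ring
      linarith [hmono3, this.le, this.ge]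
    · rw [intervalIntegral.integral_undef hi]
      nlinarith [hM0, hH]
  -- the candidate ρt
  have hρtm : Measurable (fun z => if z ∈ Set.Icc (0 : ℝ) H then ρ z else 0) :=
    Measurable.ite measurableSet_Icc hρmeas measurable_const
  have hρtv : ∀ z, (if z ∈ Set.Icc (0 : ℝ) H then ρ z else 0)
      ∈ Set.Ico (0 : ℝ) (1 / (2 * r0 ^ 2)) := by
    intro z
    by_cases hz : z ∈ Set.Icc (0 : ℝ) H
    · simp only [hz, if_true]; exact hρ z hz
    · simp only [hz, if_false]; exact ⟨le_refl _, hc⟩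
  have hjPle : jP r0 Ω H P ≤ ∫ z in (0 : ℝ)..H,
      PiFun r0 Ω P (if z ∈ Set.Icc (0 : ℝ) H then ρ z else 0) z :=
    csInf_le hbdd ⟨_, hρtm, hρtv, rfl⟩
  have hval : ∫ z in (0 : ℝ)..H,
      PiFun r0 Ω P (if z ∈ Set.Icc (0 : ℝ) H then ρ z else 0) z
      = ∫ p, GFun r0 Ω Ψ Δ p ∂(muD r0 H ρ) := by
    have e1 : ∫ z in (0 : ℝ)..H,
        PiFun r0 Ω P (if z ∈ Set.Icc (0 : ℝ) H then ρ z else 0) z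
        = ∫ z in (0 : ℝ)..H, (∫ s, dInd r0 H ρ (s, z) * GFun r0 Ω Ψ Δ (s, z)) := by
      apply intervalIntegral.integral_congr
      intro z hz
      rw [Set.uIcc_of_le hH.le] at hz
      simp only [hz, if_true]
      exact (hslice z hz).symm
    rw [e1, ← houter, ← hfub, ← hWD]
  -- conclusion
  unfold Jfun
  have h1 : jP r0 Ω H P ≤ ∫ p, GFun r0 Ω Ψ Δ p ∂(muD r0 H ρ) := hval ▸ hjPle
  rw [← hGmap] at h1
  linarith [hmono, hsplit.le, hsplit.ge, h1]
end

section
/- (Normalization bound on the additive constant.) Fix C₀ ∈ ℝ. There exists C₁ ∈ ℝ such that for any (P, Ψ) ∈ 𝒰₀ with P(0,0) = 0, any λ ∈ ℝ, and any Borel probability measure σ supported in [0,R₀]², if J[σ](Ψ + λ, P − λ) ≥ −C₀ then |λ| ≤ C₁. -/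
open MeasureTheory

/-- Sup of affine functions over a bounded family is lower semicontinuous. -/
lemma lsc_sSup (S : Set (ℝ × ℝ)) (hS : S.Nonempty) (f : ℝ × ℝ → ℝ) (M : ℝ)
    (hb : ∀ p ∈ S, ∀ q : ℝ × ℝ, p.1 * q.1 + p.2 * q.2 - f p ≤ M * (|q.1| + |q.2| + 1)) :
    LowerSemicontinuous
      (fun q : ℝ × ℝ => sSup ((fun p : ℝ × ℝ => p.1 * q.1 + p.2 * q.2 - f p) '' S)) := by
  intro q y hy
  have hne : ((fun p : ℝ × ℝ => p.1 * q.1 + p.2 * q.2 - f p) '' S).Nonempty := hS.image _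
  obtain ⟨a, ⟨p, hpS, rfl⟩, hpa⟩ := exists_lt_of_lt_csSup hne hy
  have hcont : Continuous fun q' : ℝ × ℝ => p.1 * q'.1 + p.2 * q'.2 - f p := by
    fun_prop
  have hopen : IsOpen {q' : ℝ × ℝ | y < p.1 * q'.1 + p.2 * q'.2 - f p} :=
    isOpen_lt continuous_const hcont
  filter_upwards [hopen.mem_nhds hpa] with q' hq'
  refine lt_of_lt_of_le hq' (le_csSup ?_ ⟨p, hpS, rfl⟩)
  exact ⟨M * (|q'.1| + |q'.2| + 1), by rintro _ ⟨p', hp', rfl⟩; exact hb p' hp' q'⟩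

/-- Bounded measurable functions are interval integrable. -/
lemma intervalIntegrable_of_bdd {f : ℝ → ℝ} {b C : ℝ} (hb : 0 ≤ b)
    (hm : AEStronglyMeasurable f (volume.restrict (Set.Ioc 0 b)))
    (hC : ∀ s ∈ Set.Ioc (0:ℝ) b, |f s| ≤ C) :
    IntervalIntegrable f volume 0 b := by
  rw [intervalIntegrable_iff_integrableOn_Ioc_of_le hb]
  refine Integrable.mono' (integrable_const C) hm ?_
  rw [ae_restrict_iff' measurableSet_Ioc]
  exact Filter.Eventually.of_forall (fun s hs => by simpa using hC s hs)

lemma hd_t (r0 s : ℝ) : HasDerivAt (fun x : ℝ => 1 - 2 * x * r0 ^ 2) (-(2 * r0 ^ 2)) s := by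
  have h : (fun x : ℝ => 1 - 2 * x * r0 ^ 2) = fun x : ℝ => 1 - 2 * r0 ^ 2 * x := by
    funext x; ring
  rw [h]
  simpa using ((hasDerivAt_id s).const_mul (2 * r0 ^ 2)).const_sub 1

lemma hd_F1 (r0 s : ℝ) (ht : (1 - 2 * s * r0 ^ 2) ≠ 0) :
    HasDerivAt (fun x : ℝ => r0 ^ 2 / (2 * (1 - 2 * x * r0 ^ 2))) (eFun r0 s) s := by
  have h := (hasDerivAt_const s (r0 ^ 2)).div ((hd_t r0 s).const_mul 2)
    (by simpa using ht)
  refine h.congr_deriv ?_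
  unfold eFun
  field_simp
  ring

lemma hd_F2 (a r0 s : ℝ) (ht : (1 - 2 * s * r0 ^ 2) ≠ 0) :
    HasDerivAt (fun x : ℝ => a * r0 ^ 4 / (8 * (1 - 2 * x * r0 ^ 2) ^ 2))
      (a * r0 ^ 2 / (2 * (1 - 2 * s * r0 ^ 2)) * eFun r0 s) s := by
  have hden : HasDerivAt (fun x : ℝ => 8 * (1 - 2 * x * r0 ^ 2) ^ 2)
      (8 * (2 * (1 - 2 * s * r0 ^ 2) * -(2 * r0 ^ 2))) s := by
    have := ((hd_t r0 s).pow 2).const_mul 8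
    refine this.congr_deriv ?_
    push_cast; ring
  have h := (hasDerivAt_const s (a * r0 ^ 4)).div hden (by positivity)
  refine h.congr_deriv ?_
  unfold eFun
  field_simp
  ring

lemma tpos (r0 ρ : ℝ) (hu : 0 < 1 - 2 * ρ * r0 ^ 2) :
    ∀ s ∈ Set.uIcc (0:ℝ) ρ, 0 < 1 - 2 * s * r0 ^ 2 := by
  intro s hs
  rcases Set.mem_uIcc.1 hs with ⟨h1, h2⟩ | ⟨h1, h2⟩ <;> nlinarith [sq_nonneg r0]

lemma contOn_eFun (r0 ρ : ℝ) (hu : 0 < 1 - 2 * ρ * r0 ^ 2) :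
    ContinuousOn (fun s => eFun r0 s) (Set.uIcc (0:ℝ) ρ) := by
  apply ContinuousOn.div continuousOn_const
  · fun_prop
  · exact fun s hs => pow_ne_zero 2 (tpos r0 ρ hu s hs).ne'

lemma contOn_c (b r0 ρ : ℝ) (hu : 0 < 1 - 2 * ρ * r0 ^ 2) :
    ContinuousOn (fun s => b / (2 * (1 - 2 * s * r0 ^ 2))) (Set.uIcc (0:ℝ) ρ) := by
  apply ContinuousOn.div continuousOn_const
  · fun_prop
  · intro s hs
    have := tpos r0 ρ hu s hs
    positivity

lemma contOn_ce (a r0 ρ : ℝ) (hu : 0 < 1 - 2 * ρ * r0 ^ 2) :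
    ContinuousOn (fun s => a * r0 ^ 2 / (2 * (1 - 2 * s * r0 ^ 2)) * eFun r0 s)
      (Set.uIcc (0:ℝ) ρ) :=
  (contOn_c (a * r0 ^ 2) r0 ρ hu).mul (contOn_eFun r0 ρ hu)

lemma integral_eFun (r0 ρ : ℝ) (hρ0 : 0 ≤ ρ) (hu : 0 < 1 - 2 * ρ * r0 ^ 2) :
    ∫ s in (0:ℝ)..ρ, eFun r0 s = r0 ^ 2 / (2 * (1 - 2 * ρ * r0 ^ 2)) - r0 ^ 2 / 2 := by
  have h := intervalIntegral.integral_eq_sub_of_hasDerivAt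
    (f := fun x : ℝ => r0 ^ 2 / (2 * (1 - 2 * x * r0 ^ 2)))
    (fun s hs => hd_F1 r0 s (tpos r0 ρ hu s hs).ne')
    ((contOn_eFun r0 ρ hu).intervalIntegrable)
  rw [h]; norm_num

lemma integral_ce (a r0 ρ : ℝ) (hρ0 : 0 ≤ ρ) (hu : 0 < 1 - 2 * ρ * r0 ^ 2) :
    ∫ s in (0:ℝ)..ρ, a * r0 ^ 2 / (2 * (1 - 2 * s * r0 ^ 2)) * eFun r0 s
      = a * r0 ^ 4 / (8 * (1 - 2 * ρ * r0 ^ 2) ^ 2) - a * r0 ^ 4 / 8 := by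
  have h := intervalIntegral.integral_eq_sub_of_hasDerivAt
    (f := fun x : ℝ => a * r0 ^ 4 / (8 * (1 - 2 * x * r0 ^ 2) ^ 2))
    (fun s hs => hd_F2 a r0 s (tpos r0 ρ hu s hs).ne')
    ((contOn_ce a r0 ρ hu).intervalIntegrable)
  rw [h]; norm_num

lemma integral_lower (Ω K r0 ρ : ℝ) (hΩ : 0 < Ω) (hK : 0 ≤ K) (hρ0 : 0 ≤ ρ)
    (hu : 0 < 1 - 2 * ρ * r0 ^ 2) :
    -(K ^ 2 / (2 * Ω ^ 2)) - Ω ^ 2 * r0 ^ 4 / 8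
      ≤ ∫ s in (0:ℝ)..ρ, (Ω ^ 2 * r0 ^ 2 / (2 * (1 - 2 * s * r0 ^ 2)) - K) * eFun r0 s := by
  set u := 1 - 2 * ρ * r0 ^ 2 with hud
  have heq : ∫ s in (0:ℝ)..ρ, (Ω ^ 2 * r0 ^ 2 / (2 * (1 - 2 * s * r0 ^ 2)) - K) * eFun r0 s
      = (Ω ^ 2 * r0 ^ 4 / (8 * u ^ 2) - Ω ^ 2 * r0 ^ 4 / 8)
        - K * (r0 ^ 2 / (2 * u) - r0 ^ 2 / 2) := by
    have hsplit : ∀ s : ℝ, (Ω ^ 2 * r0 ^ 2 / (2 * (1 - 2 * s * r0 ^ 2)) - K) * eFun r0 s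
        = Ω ^ 2 * r0 ^ 2 / (2 * (1 - 2 * s * r0 ^ 2)) * eFun r0 s - K * eFun r0 s := by
      intro s; ring
    simp only [hsplit]
    rw [intervalIntegral.integral_sub (g := fun s => K * eFun r0 s) ((contOn_ce (Ω ^ 2) r0 ρ hu).intervalIntegrable)
      ((continuousOn_const.mul (contOn_eFun r0 ρ hu)).intervalIntegrable),
      intervalIntegral.integral_const_mul, integral_ce (Ω ^ 2) r0 ρ hρ0 hu,
      integral_eFun r0 ρ hρ0 hu]
  rw [heq]
  have hKr : (0:ℝ) ≤ K * r0 ^ 2 / 2 := by positivity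
  have key : Ω ^ 2 * r0 ^ 4 / (8 * u ^ 2) - K * r0 ^ 2 / (2 * u) + K ^ 2 / (2 * Ω ^ 2)
      = (Ω ^ 2 * r0 ^ 2 / u - 2 * K) ^ 2 / (8 * Ω ^ 2) := by
    field_simp
    ring
  have pos : (0:ℝ) ≤ (Ω ^ 2 * r0 ^ 2 / u - 2 * K) ^ 2 / (8 * Ω ^ 2) :=
    div_nonneg (sq_nonneg _) (by positivity)
  have expand : K * (r0 ^ 2 / (2 * u) - r0 ^ 2 / 2) = K * r0 ^ 2 / (2 * u) - K * r0 ^ 2 / 2 := by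
    ring
  linarith
set_option maxHeartbeats 1000000 in
/-- normalization bound on the additive constant: for fixed `C₀` there is `C₁`
such that for every `(P,Ψ) ∈ 𝒰₀` with `P(0,0) = 0`, every `λ ∈ ℝ` and every Borel probability
measure `σ` supported in `[0,R₀]²`, `J[σ](Ψ+λ, P−λ) ≥ −C₀` implies `|λ| ≤ C₁`. -/
theorem stmt17 (r0 Ω H R0 C₀ : ℝ) (hr0 : 0 < r0) (hΩ : 0 < Ω) (hH : 0 < H) (hR0 : 1 < R0) :
    ∃ C₁ : ℝ, ∀ (Δ : Set (ℝ × ℝ)), IsClosed Δ → Δ ⊆ Set.Icc (0, 0) (R0, R0) →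
      ∀ (σ : Measure (ℝ × ℝ)), IsProbabilityMeasure σ → σ Δᶜ = 0 →
      ∀ (P Ψ : ℝ × ℝ → ℝ), memU0 r0 H Δ P Ψ → P (0, 0) = 0 →
      ∀ lam : ℝ,
        -C₀ ≤ Jfun r0 Ω H σ (fun q => Ψ q + lam) (fun p => P p - lam) →
        |lam| ≤ C₁ := by
  have hm2 : (0:ℝ) < 2 * r0 ^ 2 := by positivity
  have hmpos : (0:ℝ) < 1 / (2 * r0 ^ 2) := by positivity
  -- the fixed test density `ρ̄` and associated constants
  obtain ⟨u₀, hu₀def⟩ : ∃ u : ℝ, u = H * r0 ^ 2 / (8 + 4 * H * r0 ^ 2) := ⟨_, rfl⟩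
  have hden : (0:ℝ) < 8 + 4 * H * r0 ^ 2 := by positivity
  have hu₀pos : 0 < u₀ := by rw [hu₀def]; positivity
  have hu₀lt : u₀ < 1 := by
    rw [hu₀def, div_lt_one hden]; nlinarith [mul_pos hH (pow_pos hr0 2)]
  obtain ⟨ρb, hρbdef⟩ : ∃ x : ℝ, x = (1 - u₀) / (2 * r0 ^ 2) := ⟨_, rfl⟩
  have hρb0 : 0 ≤ ρb := by
    rw [hρbdef]; exact div_nonneg (by linarith) hm2.le
  have hρblt : ρb < 1 / (2 * r0 ^ 2) := by
    rw [hρbdef, div_lt_div_iff₀ hm2 hm2]; nlinarith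
  have hρbmem : ρb ∈ Set.Ico (0:ℝ) (1 / (2 * r0 ^ 2)) := ⟨hρb0, hρblt⟩
  have hueq : 1 - 2 * ρb * r0 ^ 2 = u₀ := by
    rw [hρbdef]; field_simp; ring
  have hupos : 0 < 1 - 2 * ρb * r0 ^ 2 := by rw [hueq]; exact hu₀pos
  obtain ⟨E, hEdef⟩ : ∃ x : ℝ, x = r0 ^ 2 / (2 * u₀) - r0 ^ 2 / 2 := ⟨_, rfl⟩
  have hE : ∫ s in (0:ℝ)..ρb, eFun r0 s = E := by
    rw [integral_eFun r0 ρb hρb0 hupos, hueq]; exact hEdef.symm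
  have hHE : 4 ≤ H * E := by
    have : H * E = 4 + 3 * (H * r0 ^ 2) / 2 := by
      rw [hEdef, hu₀def]; field_simp; ring
    have hHr : (0:ℝ) < H * r0 ^ 2 := by positivity
    linarith
  obtain ⟨A₀, hA₀def⟩ : ∃ x : ℝ,
      x = ∫ s in (0:ℝ)..ρb, Ω ^ 2 * r0 ^ 2 / (2 * (1 - 2 * s * r0 ^ 2)) * eFun r0 s := ⟨_, rfl⟩
  obtain ⟨D, hDdef⟩ : ∃ x : ℝ, x = C₀ + R0 / (2 * r0 ^ 2) + H * A₀ + H * E := ⟨_, rfl⟩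
  refine ⟨|C₀ + R0 / (2 * r0 ^ 2)| + |D|, ?_⟩
  intro Δ hΔcl hΔsub σ hσp hσΔ P Ψ hU0 hP0 lam hJ
  obtain ⟨h1, h2, h3⟩ := hU0
  haveI := hσp
  -- basic facts
  have hDom0 : ((0:ℝ), (0:ℝ)) ∈ Dom r0 H := ⟨⟨le_refl 0, hmpos⟩, le_refl 0, hH.le⟩
  have hDomne : (Dom r0 H).Nonempty := ⟨_, hDom0⟩
  have hΔne : Δ.Nonempty := by
    by_contra h
    rw [Set.not_nonempty_iff_eq_empty] at h
    rw [h, Set.compl_empty] at hσΔ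
    simpa [measure_univ] using hσΔ
  have hΔmem : ∀ q ∈ Δ, 0 ≤ q.1 ∧ q.1 ≤ R0 ∧ 0 ≤ q.2 ∧ q.2 ≤ R0 := by
    intro q hq
    have h := hΔsub hq
    rw [Set.mem_Icc] at h
    exact ⟨h.1.1, h.2.1, h.1.2, h.2.2⟩
  have hDombd : ∀ p ∈ Dom r0 H, 0 ≤ p.1 ∧ p.1 ≤ 1 / (2 * r0 ^ 2) ∧ 0 ≤ p.2 ∧ p.2 ≤ H :=
    fun p hp => ⟨hp.1.1, hp.1.2.le, hp.2.1, hp.2.2⟩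
  have hΨ0 : ∀ q : ℝ × ℝ, 0 ≤ q.1 → 0 ≤ q.2 → 0 ≤ Ψ q := by
    intro q hq1 hq2
    have h := h3 (0, 0) hDom0 q hq1 hq2
    rw [hP0] at h
    simpa using h
  obtain ⟨B, hBdef⟩ : ∃ x : ℝ, x = R0 * (1 / (2 * r0 ^ 2)) + R0 * H + 1 := ⟨_, rfl⟩
  have hB1 : 1 ≤ B := by
    rw [hBdef]; nlinarith [mul_pos (lt_trans one_pos hR0) hmpos,
      mul_pos (lt_trans one_pos hR0) hH]
  have helem : ∀ p ∈ Dom r0 H, ∀ q ∈ Δ, p.1 * q.1 + p.2 * q.2 - Ψ q ≤ B - 1 := by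
    intro p hp q hq
    obtain ⟨hp1, hp2, hp3, hp4⟩ := hDombd p hp
    obtain ⟨hq1, hq2, hq3, hq4⟩ := hΔmem q hq
    have hΨ := hΨ0 q hq1 hq3
    have e1 : p.1 * q.1 ≤ (1 / (2 * r0 ^ 2)) * R0 := by
      apply mul_le_mul hp2 hq2 hq1 hmpos.le
    have e2 : p.2 * q.2 ≤ H * R0 := mul_le_mul hp4 hq4 hq3 hH.le
    rw [hBdef]; nlinarith
  have hPub : ∀ p ∈ Dom r0 H, P p ≤ B - 1 := by
    intro p hp
    rw [h1 p hp]
    exact csSup_le (hΔne.image _) (by rintro _ ⟨q, hq, rfl⟩; exact helem p hp q hq)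
  have hqs : ∃ qs ∈ Δ, Ψ qs < 1 := by
    have h00 := h1 (0, 0) hDom0
    rw [hP0] at h00
    have hlt : (-1:ℝ) < sSup ((fun q : ℝ × ℝ =>
        ((0:ℝ), (0:ℝ)).1 * q.1 + ((0:ℝ), (0:ℝ)).2 * q.2 - Ψ q) '' Δ) := by
      rw [← h00]; norm_num
    obtain ⟨a, ⟨qs, hqsΔ, rfl⟩, ha⟩ := exists_lt_of_lt_csSup (hΔne.image _) hlt
    refine ⟨qs, hqsΔ, ?_⟩
    simp only at ha
    linarith
  obtain ⟨qs, hqsΔ, hqsΨ⟩ := hqs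
  have hPlb : ∀ p ∈ Dom r0 H, -1 ≤ P p := by
    intro p hp
    rw [h1 p hp]
    have hmem : p.1 * qs.1 + p.2 * qs.2 - Ψ qs
        ∈ (fun q : ℝ × ℝ => p.1 * q.1 + p.2 * q.2 - Ψ q) '' Δ := ⟨qs, hqsΔ, rfl⟩
    have hba : BddAbove ((fun q : ℝ × ℝ => p.1 * q.1 + p.2 * q.2 - Ψ q) '' Δ) :=
      ⟨B - 1, by rintro _ ⟨q, hq, rfl⟩; exact helem p hp q hq⟩
    have hle := le_csSup hba hmem
    obtain ⟨hp1, hp2, hp3, hp4⟩ := hDombd p hp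
    obtain ⟨hq1, hq2, hq3, hq4⟩ := hΔmem qs hqsΔ
    linarith [mul_nonneg hp1 hq1, mul_nonneg hp3 hq3]
  have hΨub : ∀ q : ℝ × ℝ, 0 ≤ q.1 → q.1 ≤ R0 → 0 ≤ q.2 → q.2 ≤ R0 → Ψ q ≤ B := by
    intro q hq1 hq2 hq3 hq4
    rw [h2 q hq1 hq3]
    apply csSup_le (hDomne.image _)
    rintro _ ⟨p, hp, rfl⟩
    obtain ⟨hp1, hp2, hp3, hp4⟩ := hDombd p hp
    have := hPlb p hp
    have e1 : p.1 * q.1 ≤ (1 / (2 * r0 ^ 2)) * R0 := mul_le_mul hp2 hq2 hq1 hmpos.le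
    have e2 : p.2 * q.2 ≤ H * R0 := mul_le_mul hp4 hq4 hq3 hH.le
    rw [hBdef]; nlinarith
  -- measurable versions of P and Ψ
  obtain ⟨Pm, hPmdef⟩ : ∃ F : ℝ × ℝ → ℝ, F = fun p : ℝ × ℝ =>
      sSup ((fun q : ℝ × ℝ => q.1 * p.1 + q.2 * p.2 - Ψ q) '' Δ) := ⟨_, rfl⟩
  have hPmm : Measurable Pm := by
    rw [hPmdef]
    refine (lsc_sSup Δ hΔne Ψ R0 ?_).measurable
    intro q hq p
    obtain ⟨hq1, hq2, hq3, hq4⟩ := hΔmem q hq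
    have hΨ := hΨ0 q hq1 hq3
    have e1 : q.1 * p.1 ≤ R0 * |p.1| := by
      calc q.1 * p.1 ≤ q.1 * |p.1| := mul_le_mul_of_nonneg_left (le_abs_self p.1) hq1
      _ ≤ R0 * |p.1| := mul_le_mul_of_nonneg_right hq2 (abs_nonneg _)
    have e2 : q.2 * p.2 ≤ R0 * |p.2| := by
      calc q.2 * p.2 ≤ q.2 * |p.2| := mul_le_mul_of_nonneg_left (le_abs_self p.2) hq3
      _ ≤ R0 * |p.2| := mul_le_mul_of_nonneg_right hq4 (abs_nonneg _)
    nlinarith [abs_nonneg p.1, abs_nonneg p.2]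
  have hPeq : ∀ p ∈ Dom r0 H, P p = Pm p := by
    intro p hp
    rw [h1 p hp, hPmdef]
    have hfe : (fun q : ℝ × ℝ => p.1 * q.1 + p.2 * q.2 - Ψ q)
        = fun q : ℝ × ℝ => q.1 * p.1 + q.2 * p.2 - Ψ q := by
      funext q; ring
    rw [hfe]
  obtain ⟨Ψm, hΨmdef⟩ : ∃ F : ℝ × ℝ → ℝ, F = fun q : ℝ × ℝ =>
      sSup ((fun p : ℝ × ℝ => p.1 * q.1 + p.2 * q.2 - P p) '' Dom r0 H) := ⟨_, rfl⟩
  have hΨmm : Measurable Ψm := by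
    rw [hΨmdef]
    refine (lsc_sSup (Dom r0 H) hDomne P (1 / (2 * r0 ^ 2) + H + 1) ?_).measurable
    intro p hp q
    obtain ⟨hp1, hp2, hp3, hp4⟩ := hDombd p hp
    have hPl := hPlb p hp
    have e1 : p.1 * q.1 ≤ (1 / (2 * r0 ^ 2)) * |q.1| := by
      calc p.1 * q.1 ≤ p.1 * |q.1| := mul_le_mul_of_nonneg_left (le_abs_self q.1) hp1
      _ ≤ _ := mul_le_mul_of_nonneg_right hp2 (abs_nonneg _)
    have e2 : p.2 * q.2 ≤ H * |q.2| := by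
      calc p.2 * q.2 ≤ p.2 * |q.2| := mul_le_mul_of_nonneg_left (le_abs_self q.2) hp3
      _ ≤ _ := mul_le_mul_of_nonneg_right hp4 (abs_nonneg _)
    nlinarith [mul_nonneg hmpos.le (abs_nonneg q.1), mul_nonneg hmpos.le (abs_nonneg q.2),
      mul_nonneg hH.le (abs_nonneg q.1), mul_nonneg hH.le (abs_nonneg q.2),
      abs_nonneg q.1, abs_nonneg q.2, hmpos.le, hH.le]
  have hΨeq : ∀ q : ℝ × ℝ, 0 ≤ q.1 → 0 ≤ q.2 → Ψ q = Ψm q := by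
    intro q hq1 hq2; rw [h2 q hq1 hq2, hΨmdef]
  -- the σ-integral estimate
  have hae : ∀ᵐ q ∂σ, q ∈ Δ := mem_ae_iff.mpr hσΔ
  obtain ⟨fI, hfIdef⟩ : ∃ F : ℝ × ℝ → ℝ,
      F = fun q : ℝ × ℝ => q.1 / (2 * r0 ^ 2) - Ω * Real.sqrt q.1 - (Ψ q + lam) := ⟨_, rfl⟩
  have hfm : AEStronglyMeasurable fI σ := by
    have hmeas : Measurable (fun q : ℝ × ℝ =>
        q.1 / (2 * r0 ^ 2) - Ω * Real.sqrt q.1 - (Ψm q + lam)) := by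
      refine Measurable.sub (Measurable.sub ?_ ?_) ?_
      · exact measurable_fst.div_const _
      · exact (Real.continuous_sqrt.measurable.comp measurable_fst).const_mul Ω
      · exact hΨmm.add_const lam
    refine hmeas.aestronglyMeasurable.congr ?_
    filter_upwards [hae] with q hq
    obtain ⟨hq1, hq2, hq3, hq4⟩ := hΔmem q hq
    rw [hfIdef]
    simp only
    rw [hΨeq q hq1 hq3]
  have hfub : ∀ᵐ q ∂σ, fI q ≤ R0 / (2 * r0 ^ 2) - lam := by
    filter_upwards [hae] with q hq
    obtain ⟨hq1, hq2, hq3, hq4⟩ := hΔmem q hq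
    have e1 : q.1 / (2 * r0 ^ 2) ≤ R0 / (2 * r0 ^ 2) := by gcongr
    have e2 : 0 ≤ Ω * Real.sqrt q.1 := by positivity
    have e3 : 0 ≤ Ψ q := hΨ0 q hq1 hq3
    rw [hfIdef]
    simp only
    linarith
  have hfnorm : ∀ᵐ q ∂σ, ‖fI q‖ ≤ R0 / (2 * r0 ^ 2) + Ω * Real.sqrt R0 + B + |lam| := by
    filter_upwards [hae] with q hq
    obtain ⟨hq1, hq2, hq3, hq4⟩ := hΔmem q hq
    have e0 : 0 ≤ q.1 / (2 * r0 ^ 2) := by positivity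
    have e1 : q.1 / (2 * r0 ^ 2) ≤ R0 / (2 * r0 ^ 2) := by gcongr
    have e2 : 0 ≤ Ω * Real.sqrt q.1 := by positivity
    have e2' : Ω * Real.sqrt q.1 ≤ Ω * Real.sqrt R0 :=
      mul_le_mul_of_nonneg_left (Real.sqrt_le_sqrt hq2) hΩ.le
    have e3 : 0 ≤ Ψ q := hΨ0 q hq1 hq3
    have e4 : Ψ q ≤ B := hΨub q hq1 hq2 hq3 hq4
    rw [hfIdef]
    simp only [Real.norm_eq_abs]
    rw [abs_le]
    constructor
    · linarith [neg_abs_le lam, le_abs_self lam]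
    · linarith [neg_abs_le lam, le_abs_self lam]
  have hIint : Integrable fI σ := Integrable.mono' (integrable_const _) hfm hfnorm
  have hIle : ∫ q, fI q ∂σ ≤ R0 / (2 * r0 ^ 2) - lam := by
    have h := integral_mono_ae hIint (integrable_const (R0 / (2 * r0 ^ 2) - lam)) hfub
    rwa [integral_const, probReal_univ, one_smul] at h
  -- constants for the jP estimates
  obtain ⟨K, hKdef⟩ : ∃ x : ℝ, x = B + |lam| := ⟨_, rfl⟩
  have hK0 : 0 ≤ K := by rw [hKdef]; linarith [abs_nonneg lam]
  have hPK : ∀ p ∈ Dom r0 H, P p - lam ≤ K ∧ |P p - lam| ≤ K := by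
    intro p hp
    have hu := hPub p hp
    have hl := hPlb p hp
    have h1' : P p - lam ≤ K := by
      rw [hKdef]; linarith [neg_abs_le lam]
    refine ⟨h1', abs_le.mpr ⟨?_, h1'⟩⟩
    rw [hKdef]; linarith [le_abs_self lam]
  obtain ⟨L, hLdef⟩ : ∃ x : ℝ, x = -(K ^ 2 / (2 * Ω ^ 2)) - Ω ^ 2 * r0 ^ 4 / 8 := ⟨_, rfl⟩
  have hL0 : L ≤ 0 := by
    rw [hLdef]
    have e1 : (0:ℝ) ≤ K ^ 2 / (2 * Ω ^ 2) := by positivity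
    have e2 : (0:ℝ) ≤ Ω ^ 2 * r0 ^ 4 / 8 := by positivity
    linarith
  have hu_of : ∀ ρ ∈ Set.Ico (0:ℝ) (1 / (2 * r0 ^ 2)), 0 < 1 - 2 * ρ * r0 ^ 2 := by
    intro ρ hρ
    have h := (lt_div_iff₀ hm2).mp hρ.2
    nlinarith
  -- the jointly measurable version of the Π-integrand
  obtain ⟨gm, hgmdef⟩ : ∃ F : ℝ → ℝ → ℝ, F = fun z s =>
      (Ω ^ 2 * r0 ^ 2 / (2 * (1 - 2 * s * r0 ^ 2)) - (Pm (s, z) - lam)) * eFun r0 s := ⟨_, rfl⟩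
  have hgmm : Measurable (Function.uncurry gm) := by
    rw [hgmdef, Function.uncurry_def]
    have hswap : Measurable fun zs : ℝ × ℝ => Pm (zs.2, zs.1) :=
      hPmm.comp (measurable_snd.prodMk measurable_fst)
    refine Measurable.mul (Measurable.sub ?_ (hswap.sub_const lam)) ?_
    · exact measurable_const.div (by fun_prop)
    · exact measurable_const.div (by fun_prop)
  -- uniform bound on the Π-integrand
  have hgbd : ∀ ρ ∈ Set.Ico (0:ℝ) (1 / (2 * r0 ^ 2)), ∀ z ∈ Set.Icc (0:ℝ) H,
      ∀ s ∈ Set.Ioc (0:ℝ) ρ,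
      |(Ω ^ 2 * r0 ^ 2 / (2 * (1 - 2 * s * r0 ^ 2)) - (P (s, z) - lam)) * eFun r0 s|
        ≤ (Ω ^ 2 * r0 ^ 2 / (2 * (1 - 2 * ρ * r0 ^ 2)) + K)
            * (r0 ^ 4 / (1 - 2 * ρ * r0 ^ 2) ^ 2) := by
    intro ρ hρ z hz s hs
    have huρ : 0 < 1 - 2 * ρ * r0 ^ 2 := hu_of ρ hρ
    obtain ⟨hs1, hs2⟩ := hs
    have hsDom : ((s, z) : ℝ × ℝ) ∈ Dom r0 H := ⟨⟨hs1.le, lt_of_le_of_lt hs2 hρ.2⟩, hz⟩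
    have hts : 0 < 1 - 2 * s * r0 ^ 2 := by nlinarith [sq_nonneg r0]
    have htu : 1 - 2 * ρ * r0 ^ 2 ≤ 1 - 2 * s * r0 ^ 2 := by nlinarith [sq_nonneg r0]
    have hPd := (hPK _ hsDom).2
    have hc0 : 0 ≤ Ω ^ 2 * r0 ^ 2 / (2 * (1 - 2 * s * r0 ^ 2)) := by positivity
    have hcub : Ω ^ 2 * r0 ^ 2 / (2 * (1 - 2 * s * r0 ^ 2))
        ≤ Ω ^ 2 * r0 ^ 2 / (2 * (1 - 2 * ρ * r0 ^ 2)) := by gcongr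
    have he0 : 0 ≤ eFun r0 s := by unfold eFun; positivity
    have heub : eFun r0 s ≤ r0 ^ 4 / (1 - 2 * ρ * r0 ^ 2) ^ 2 := by
      unfold eFun; gcongr
    rw [abs_mul, abs_of_nonneg he0]
    have habs : |Ω ^ 2 * r0 ^ 2 / (2 * (1 - 2 * s * r0 ^ 2)) - (P (s, z) - lam)|
        ≤ Ω ^ 2 * r0 ^ 2 / (2 * (1 - 2 * ρ * r0 ^ 2)) + K := by
      obtain ⟨hl, hr⟩ := abs_le.mp hPd
      rw [abs_le]
      constructor <;> linarith
    exact mul_le_mul habs heub he0 (add_nonneg (by positivity) hK0)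
  -- interval integrability of the Π-integrand
  have hInt : ∀ ρ ∈ Set.Ico (0:ℝ) (1 / (2 * r0 ^ 2)), ∀ z ∈ Set.Icc (0:ℝ) H,
      IntervalIntegrable (fun s => (Ω ^ 2 * r0 ^ 2 / (2 * (1 - 2 * s * r0 ^ 2))
        - (P (s, z) - lam)) * eFun r0 s) volume 0 ρ := by
    intro ρ hρ z hz
    apply intervalIntegrable_of_bdd (C := (Ω ^ 2 * r0 ^ 2 / (2 * (1 - 2 * ρ * r0 ^ 2)) + K)
      * (r0 ^ 4 / (1 - 2 * ρ * r0 ^ 2) ^ 2)) hρ.1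
    · have hgz : Measurable (gm z) := hgmm.comp measurable_prodMk_left
      refine hgz.aestronglyMeasurable.congr ?_
      rw [Filter.EventuallyEq, ae_restrict_iff' measurableSet_Ioc]
      refine Filter.Eventually.of_forall (fun s hs => ?_)
      have hsDom : ((s, z) : ℝ × ℝ) ∈ Dom r0 H := ⟨⟨hs.1.le, lt_of_le_of_lt hs.2 hρ.2⟩, hz⟩
      rw [hgmdef]
      simp only
      rw [← hPeq _ hsDom]
    · exact hgbd ρ hρ z hz
  -- pointwise lower bound on Π
  have hPilb : ∀ ρ ∈ Set.Ico (0:ℝ) (1 / (2 * r0 ^ 2)), ∀ z ∈ Set.Icc (0:ℝ) H,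
      L ≤ PiFun r0 Ω (fun p => P p - lam) ρ z := by
    intro ρ hρ z hz
    have huρ : 0 < 1 - 2 * ρ * r0 ^ 2 := hu_of ρ hρ
    have hlow := integral_lower Ω K r0 ρ hΩ hK0 hρ.1 huρ
    have hmono : ∫ s in (0:ℝ)..ρ, (Ω ^ 2 * r0 ^ 2 / (2 * (1 - 2 * s * r0 ^ 2)) - K) * eFun r0 s
        ≤ ∫ s in (0:ℝ)..ρ, (Ω ^ 2 * r0 ^ 2 / (2 * (1 - 2 * s * r0 ^ 2))
            - (P (s, z) - lam)) * eFun r0 s := by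
      apply intervalIntegral.integral_mono_on hρ.1
        (((contOn_c (Ω ^ 2 * r0 ^ 2) r0 ρ huρ).sub continuousOn_const).mul
          (contOn_eFun r0 ρ huρ)).intervalIntegrable
        (hInt ρ hρ z hz)
      intro s hs
      have hsDom : ((s, z) : ℝ × ℝ) ∈ Dom r0 H := ⟨⟨hs.1, lt_of_le_of_lt hs.2 hρ.2⟩, hz⟩
      have hPd : P (s, z) - lam ≤ K := (hPK _ hsDom).1
      have he0 : 0 ≤ eFun r0 s := by unfold eFun; positivity
      exact mul_le_mul_of_nonneg_right (by simp only [Pi.sub_apply]; linarith) he0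
    have hPieq : PiFun r0 Ω (fun p => P p - lam) ρ z = ∫ s in (0:ℝ)..ρ,
        (Ω ^ 2 * r0 ^ 2 / (2 * (1 - 2 * s * r0 ^ 2)) - (P (s, z) - lam)) * eFun r0 s := by
      simp only [PiFun]
    rw [hPieq, hLdef]
    linarith
  -- the admissible set for jP
  obtain ⟨S, hSdef⟩ : ∃ s : Set ℝ, s = {x : ℝ | ∃ ρt : ℝ → ℝ, Measurable ρt ∧
      (∀ z, ρt z ∈ Set.Ico (0 : ℝ) (1 / (2 * r0 ^ 2))) ∧
      x = ∫ z in (0 : ℝ)..H, PiFun r0 Ω (fun p => P p - lam) (ρt z) z} := ⟨_, rfl⟩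
  have hjPS : jP r0 Ω H (fun p => P p - lam) = sInf S := by rw [hSdef]; rfl
  have hSbdd : BddBelow S := by
    refine ⟨H * L, ?_⟩
    rw [hSdef]
    rintro x ⟨ρt, hρtm, hρtmem, rfl⟩
    by_cases hint : IntervalIntegrable
      (fun z => PiFun r0 Ω (fun p => P p - lam) (ρt z) z) volume 0 H
    · have h := intervalIntegral.integral_mono_on hH.le intervalIntegrable_const hint
        (fun z hz => hPilb (ρt z) (hρtmem z) z hz)
      rwa [intervalIntegral.integral_const, sub_zero, smul_eq_mul] at h
    · rw [intervalIntegral.integral_undef hint]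
      nlinarith [mul_nonneg hH.le (neg_nonneg.mpr hL0)]
  have hjP0 : jP r0 Ω H (fun p => P p - lam) ≤ 0 := by
    rw [hjPS]
    apply csInf_le hSbdd
    rw [hSdef]
    refine ⟨fun _ => 0, measurable_const, fun _ => ⟨le_refl 0, hmpos⟩, ?_⟩
    simp [PiFun, intervalIntegral.integral_same]
  -- pointwise upper bound on Π at the test density ρb
  have hPiub : ∀ z ∈ Set.Icc (0:ℝ) H,
      PiFun r0 Ω (fun p => P p - lam) ρb z ≤ A₀ + (1 + lam) * E := by
    intro z hz
    have hcont : ContinuousOn (fun s => (Ω ^ 2 * r0 ^ 2 / (2 * (1 - 2 * s * r0 ^ 2))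
        + (1 + lam)) * eFun r0 s) (Set.uIcc (0:ℝ) ρb) :=
      ((contOn_c (Ω ^ 2 * r0 ^ 2) r0 ρb hupos).add continuousOn_const).mul
        (contOn_eFun r0 ρb hupos)
    have hmono := intervalIntegral.integral_mono_on hρb0 (hInt ρb hρbmem z hz)
      hcont.intervalIntegrable (fun s hs => ?ptwise)
    case ptwise =>
      have hsDom : ((s, z) : ℝ × ℝ) ∈ Dom r0 H := ⟨⟨hs.1, lt_of_le_of_lt hs.2 hρblt⟩, hz⟩
      have hPl := hPlb _ hsDom
      have he0 : 0 ≤ eFun r0 s := by unfold eFun; positivity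
      exact mul_le_mul_of_nonneg_right (by linarith) he0
    have hsplit : ∀ s : ℝ, (Ω ^ 2 * r0 ^ 2 / (2 * (1 - 2 * s * r0 ^ 2)) + (1 + lam)) * eFun r0 s
        = Ω ^ 2 * r0 ^ 2 / (2 * (1 - 2 * s * r0 ^ 2)) * eFun r0 s + (1 + lam) * eFun r0 s :=
      fun s => by ring
    have hval : (∫ s in (0:ℝ)..ρb, (Ω ^ 2 * r0 ^ 2 / (2 * (1 - 2 * s * r0 ^ 2))
        + (1 + lam)) * eFun r0 s) = A₀ + (1 + lam) * E := by
      simp only [hsplit]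
      rw [intervalIntegral.integral_add (g := fun s => (1 + lam) * eFun r0 s) ((contOn_ce (Ω ^ 2) r0 ρb hupos).intervalIntegrable)
        ((continuousOn_const.mul (contOn_eFun r0 ρb hupos)).intervalIntegrable),
        intervalIntegral.integral_const_mul, hE, ← hA₀def]
    have hPieq : PiFun r0 Ω (fun p => P p - lam) ρb z = ∫ s in (0:ℝ)..ρb,
        (Ω ^ 2 * r0 ^ 2 / (2 * (1 - 2 * s * r0 ^ 2)) - (P (s, z) - lam)) * eFun r0 s := by
      simp only [PiFun]
    rw [hPieq]
    rw [hval] at hmono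
    exact hmono
  -- interval integrability of z ↦ Π(ρb, z)
  have hPieqΦ : ∀ z ∈ Set.Ioc (0:ℝ) H, PiFun r0 Ω (fun p => P p - lam) ρb z
      = ∫ s in Set.Ioc (0:ℝ) ρb, gm z s := by
    intro z hz
    have hzIcc : z ∈ Set.Icc (0:ℝ) H := ⟨hz.1.le, hz.2⟩
    simp only [PiFun]
    rw [intervalIntegral.integral_of_le hρb0]
    apply setIntegral_congr_fun measurableSet_Ioc
    intro s hs
    have hsDom : ((s, z) : ℝ × ℝ) ∈ Dom r0 H := ⟨⟨hs.1.le, lt_of_le_of_lt hs.2 hρblt⟩, hzIcc⟩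
    rw [hgmdef]
    simp only
    rw [hPeq _ hsDom]
  have hΦmm : Measurable (fun z => ∫ s in Set.Ioc (0:ℝ) ρb, gm z s) :=
    (MeasureTheory.StronglyMeasurable.integral_prod_right
      (ν := volume.restrict (Set.Ioc (0:ℝ) ρb)) hgmm.stronglyMeasurable).measurable
  have hPiInt : IntervalIntegrable (fun z => PiFun r0 Ω (fun p => P p - lam) ρb z) volume 0 H := by
    apply intervalIntegrable_of_bdd
      (C := ((Ω ^ 2 * r0 ^ 2 / (2 * (1 - 2 * ρb * r0 ^ 2)) + K)
        * (r0 ^ 4 / (1 - 2 * ρb * r0 ^ 2) ^ 2)) * (volume (Set.Ioc (0:ℝ) ρb)).toReal) hH.le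
    · refine hΦmm.aestronglyMeasurable.congr ?_
      rw [Filter.EventuallyEq, ae_restrict_iff' measurableSet_Ioc]
      exact Filter.Eventually.of_forall (fun z hz => (hPieqΦ z hz).symm)
    · intro z hz
      have hzIcc : z ∈ Set.Icc (0:ℝ) H := ⟨hz.1.le, hz.2⟩
      rw [hPieqΦ z hz]
      have hb := norm_setIntegral_le_of_norm_le_const (μ := volume)
        (C := (Ω ^ 2 * r0 ^ 2 / (2 * (1 - 2 * ρb * r0 ^ 2)) + K)
          * (r0 ^ 4 / (1 - 2 * ρb * r0 ^ 2) ^ 2))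
        (s := Set.Ioc (0:ℝ) ρb) (f := gm z) measure_Ioc_lt_top ?bd
      case bd =>
        intro s hs
        have hsDom : ((s, z) : ℝ × ℝ) ∈ Dom r0 H :=
          ⟨⟨hs.1.le, lt_of_le_of_lt hs.2 hρblt⟩, hzIcc⟩
        rw [hgmdef]
        simp only [Real.norm_eq_abs]
        rw [← hPeq _ hsDom]
        exact hgbd ρb hρbmem z hzIcc s hs
      exact hb
  -- upper bound on jP via the test density ρb
  have hjPub : jP r0 Ω H (fun p => P p - lam) ≤ H * (A₀ + (1 + lam) * E) := by
    have hmem : (∫ z in (0:ℝ)..H, PiFun r0 Ω (fun p => P p - lam) ρb z) ∈ S := by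
      rw [hSdef]
      exact ⟨fun _ => ρb, measurable_const, fun _ => hρbmem, rfl⟩
    have hle := csInf_le hSbdd hmem
    rw [hjPS]
    refine le_trans hle ?_
    have h2' := intervalIntegral.integral_mono_on hH.le hPiInt intervalIntegrable_const hPiub
    rwa [intervalIntegral.integral_const, sub_zero, smul_eq_mul] at h2'
  -- final assembly
  have hJ' : -C₀ ≤ (∫ q, fI q ∂σ) + jP r0 Ω H (fun p => P p - lam) := by
    rw [hfIdef]
    exact hJ
  rw [abs_le]
  constructor
  · rcases le_or_gt 0 lam with h | h
    · have hnn : (0:ℝ) ≤ |C₀ + R0 / (2 * r0 ^ 2)| + |D| := by positivity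
      linarith only [h, hnn]
    · have hchain : -C₀ ≤ (R0 / (2 * r0 ^ 2) - lam) + H * (A₀ + (1 + lam) * E) := by
        linarith only [hJ', hIle, hjPub]
      have hlower : lam * (1 - H * E) ≤ D := by
        rw [hDdef]
        linarith only [hchain]
      have h2' : (0:ℝ) ≤ -lam := by linarith only [h]
      have h3' : (0:ℝ) ≤ H * E - 2 := by linarith only [hHE]
      have hprod := mul_nonneg h2' h3'
      have hkey : -lam ≤ D := by linarith only [hprod, hlower]
      linarith only [hkey, le_abs_self D, abs_nonneg (C₀ + R0 / (2 * r0 ^ 2))]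
  · have hupper : lam ≤ C₀ + R0 / (2 * r0 ^ 2) := by linarith only [hIle, hjP0, hJ']
    linarith only [hupper, le_abs_self (C₀ + R0 / (2 * r0 ^ 2)), abs_nonneg D]
end
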